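/- arXiv:1503.05754 — 5 statements merged into one kernel-verified Lean document; each statement's English description precedes it below -/
import Mathlib

section
/- Let s, t ≥ 0 and let X₂, X₃, X₄ be i.i.d. random variables with the standard exponential distribution. Then (1/4)[P(max(X₂,X₃,X₄) < t) − P(s + med(X₂,X₃,X₄) < t)] + (3/4)[P(max(s,X₃,X₄) < t) − P(X₂ + med(s,X₃,X₄) < t)] = ξ(s,t), where ξ(s,t) = (1/4)·1{s<t}·e^{−s−3t}·(−e^s − 2e^{4s} + 6e^{2t} + 3e^{s+t} + 3e^{3s+t} − e^{s+2t}(9 − 6s)) + (1/4)·1{s≥t}·e^{−3t}·(−1 + 6e^t − 2e^{3t} − e^{2t}(3 − 6t)). -/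
open Real MeasureTheory Set ProbabilityTheory

/-- The median (middle value) of three reals. -/
noncomputable def med (a b c : ℝ) : ℝ := a + b + c - max a (max b c) - min a (min b c)

/-- The projection `ξ(s,t)` from the paper. -/
noncomputable def xiK (s t : ℝ) : ℝ :=
  (if s < t then
    (1/4) * exp (-s - 3*t) *
      (-exp s - 2 * exp (4*s) + 6 * exp (2*t) + 3 * exp (s+t) + 3 * exp (3*s+t)
        - exp (s + 2*t) * (9 - 6*s))
  else 0)
  + (if t ≤ s then
      (1/4) * exp (-(3*t)) *
        (-1 + 6 * exp t - 2 * exp (3*t) - exp (2*t) * (3 - 6*t))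
    else 0)

/-! ### Auxiliary definitions and lemmas -/

noncomputable def Fexp (u : ℝ) : ℝ := if 0 ≤ u then 1 - exp (-u) else 0

lemma Fexp_nonneg (u : ℝ) : 0 ≤ Fexp u := by
  unfold Fexp; split_ifs with h
  · simp [Real.exp_le_one_iff]; linarith
  · exact le_refl 0

lemma Fexp_le_one (u : ℝ) : Fexp u ≤ 1 := by
  unfold Fexp; split_ifs with h
  · have := Real.exp_pos (-u); linarith
  · norm_num

lemma expMeasure_Iio (u : ℝ) :
    expMeasure 1 (Iio u) = ENNReal.ofReal (Fexp u) := by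
  rw [expMeasure, gammaMeasure, withDensity_apply _ measurableSet_Iio]
  have h1 : gammaPDF 1 1 = exponentialPDF 1 := rfl
  rw [h1, setLIntegral_congr (Iio_ae_eq_Iic (a := u)),
    lintegral_exponentialPDF_eq_antiDeriv one_pos u]
  simp [Fexp]

lemma iInter_fin3 {Ω : Type*} (s : Fin 3 → Set Ω) : ⋂ i, s i = s 0 ∩ (s 1 ∩ s 2) := by
  ext x
  simp only [Set.mem_iInter, Set.mem_inter_iff, Fin.forall_fin_succ, IsEmpty.forall_iff, and_true]
  norm_num [Fin.succ]
  intro _ _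
  exact Iff.rfl

lemma med_lt_iff (a b c u : ℝ) :
    med a b c < u ↔ (a < u ∧ b < u) ∨ (a < u ∧ c < u) ∨ (b < u ∧ c < u) := by
  unfold med
  simp only [max_def, min_def]
  split_ifs <;>
    (constructor <;> intro h <;>
      first
        | (rcases h with ⟨h4, h5⟩ | ⟨h4, h5⟩ | ⟨h4, h5⟩ <;> linarith)
        | (first
            | exact Or.inl ⟨by linarith, by linarith⟩
            | exact Or.inr (Or.inl ⟨by linarith, by linarith⟩)
            | exact Or.inr (Or.inr ⟨by linarith, by linarith⟩)))

noncomputable def Hconv (s u : ℝ) : ℝ :=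
  if s < u then 1 - exp (-(2*u)) else if 0 ≤ u then (1 - exp (-u))^2 else 0

lemma Hconv_nonneg {s : ℝ} (hs : 0 ≤ s) (u : ℝ) : 0 ≤ Hconv s u := by
  unfold Hconv; split_ifs with h1 h2
  · have h2 : exp (-(2*u)) ≤ 1 := Real.exp_le_one_iff.mpr (by linarith)
    linarith
  · positivity
  · exact le_refl 0

lemma Hconv_le_one {s : ℝ} (hs : 0 ≤ s) (u : ℝ) : Hconv s u ≤ 1 := by
  unfold Hconv; split_ifs with h1 h2
  · have := Real.exp_pos (-(2*u)); linarith
  · have h3 : 0 < exp (-u) := Real.exp_pos _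
    have h4 : exp (-u) ≤ 1 := Real.exp_le_one_iff.mpr (by linarith)
    nlinarith
  · norm_num

lemma Hconv_eq_zero {s u : ℝ} (hs : 0 ≤ s) (hu : u ≤ 0) : Hconv s u = 0 := by
  unfold Hconv
  rcases lt_or_eq_of_le hu with h | h
  · rw [if_neg (by linarith), if_neg (by linarith)]
  · subst h; rw [if_neg (by linarith)]; simp

lemma measurable_Hconv (s : ℝ) : Measurable (Hconv s) := by
  unfold Hconv
  apply Measurable.ite (measurableSet_lt measurable_const measurable_id)
  · fun_prop
  · exact Measurable.ite (measurableSet_le measurable_const measurable_id) (by fun_prop)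
      measurable_const

lemma hasDerivAt_phi1 (T x : ℝ) :
    HasDerivAt (fun y => -exp (-y) - exp (y - 2*T)) (exp (-x) - exp (x - 2*T)) x := by
  have h1 : HasDerivAt (fun y : ℝ => -y) (-1) x := (hasDerivAt_id x).neg
  have h2 : HasDerivAt (fun y : ℝ => y - 2*T) 1 x := (hasDerivAt_id x).sub_const _
  have := (h1.exp.neg).sub h2.exp
  exact this.congr_deriv (by ring)

lemma int_f1 (T a b : ℝ) :
    ∫ x in a..b, (exp (-x) - exp (x - 2*T))
      = (-exp (-b) - exp (b - 2*T)) - (-exp (-a) - exp (a - 2*T)) := by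
  apply intervalIntegral.integral_eq_sub_of_hasDerivAt
  · intro x _; exact hasDerivAt_phi1 T x
  · apply Continuous.intervalIntegrable
    fun_prop

lemma hasDerivAt_phi2 (T x : ℝ) :
    HasDerivAt (fun y => -exp (-y) - 2*exp (-T)*y + exp (y - 2*T))
      (exp (-x) - 2*exp (-T) + exp (x - 2*T)) x := by
  have h1 : HasDerivAt (fun y : ℝ => -y) (-1) x := (hasDerivAt_id x).neg
  have h2 : HasDerivAt (fun y : ℝ => y - 2*T) 1 x := (hasDerivAt_id x).sub_const _
  have h3 : HasDerivAt (fun y : ℝ => 2*exp (-T)*y) (2*exp (-T)) x := by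
    simpa using (hasDerivAt_id x).const_mul (2*exp (-T))
  have := ((h1.exp.neg).sub h3).add h2.exp
  exact this.congr_deriv (by ring)

lemma int_f2 (T a b : ℝ) :
    ∫ x in a..b, (exp (-x) - 2*exp (-T) + exp (x - 2*T))
      = (-exp (-b) - 2*exp (-T)*b + exp (b - 2*T)) - (-exp (-a) - 2*exp (-T)*a + exp (a - 2*T)) := by
  apply intervalIntegral.integral_eq_sub_of_hasDerivAt
  · intro x _; exact hasDerivAt_phi2 T x
  · apply Continuous.intervalIntegrable
    fun_prop

lemma Jval {s t : ℝ} (hs : 0 ≤ s) (ht : 0 ≤ t)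
    (hgint : Integrable (fun x => (if 0 ≤ x then exp (-x) else 0) * Hconv s (t - x)))
    (hzero : ∀ x, x ∉ Icc 0 t → (if 0 ≤ x then exp (-x) else 0) * Hconv s (t - x) = 0) :
    ∫ x, (if 0 ≤ x then exp (-x) else 0) * Hconv s (t - x)
      = if s < t then 1 + exp (-(2*t)) - 2*exp (-(s+t)) - 2*s*exp (-t)
        else 1 - 2*t*exp (-t) - exp (-(2*t)) := by
  set g : ℝ → ℝ := fun x => (if 0 ≤ x then exp (-x) else 0) * Hconv s (t - x) with hgdef
  have h1 : ∫ x, g x = ∫ x in (0:ℝ)..t, g x := by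
    rw [intervalIntegral.integral_of_le ht, ← integral_Icc_eq_integral_Ioc]
    exact (setIntegral_eq_integral_of_forall_compl_eq_zero hzero).symm
  rw [h1]
  split_ifs with hst
  · have hts : 0 ≤ t - s := by linarith
    have hsplit : ∫ x in (0:ℝ)..t, g x
        = (∫ x in (0:ℝ)..(t-s), g x) + ∫ x in (t-s)..t, g x :=
      (intervalIntegral.integral_add_adjacent_intervals
        hgint.intervalIntegrable hgint.intervalIntegrable).symm
    have hp1 : ∫ x in (0:ℝ)..(t-s), g x = ∫ x in (0:ℝ)..(t-s), (exp (-x) - exp (x - 2*t)) := by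
      rw [intervalIntegral.integral_of_le hts, intervalIntegral.integral_of_le hts,
        integral_Ioc_eq_integral_Ioo, integral_Ioc_eq_integral_Ioo]
      apply setIntegral_congr_fun measurableSet_Ioo
      intro x hx
      obtain ⟨hx0, hx1⟩ := hx
      have hcond : s < t - x := by linarith
      simp only [hgdef, if_pos hx0.le, Hconv, if_pos hcond]
      have hexp : exp (-x) * exp (-(2*(t-x))) = exp (x - 2*t) := by
        rw [← Real.exp_add]; congr 1; ring
      linear_combination -hexp
    have hp2 : ∫ x in (t-s)..t, g x
        = ∫ x in (t-s)..t, (exp (-x) - 2*exp (-t) + exp (x - 2*t)) := by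
      have hle : t - s ≤ t := by linarith
      rw [intervalIntegral.integral_of_le hle, intervalIntegral.integral_of_le hle,
        integral_Ioc_eq_integral_Ioo, integral_Ioc_eq_integral_Ioo]
      apply setIntegral_congr_fun measurableSet_Ioo
      intro x hx
      obtain ⟨hx0, hx1⟩ := hx
      have hxpos : 0 ≤ x := by linarith
      have hcond1 : ¬ s < t - x := by push_neg; linarith
      have hcond2 : 0 ≤ t - x := by linarith
      simp only [hgdef, if_pos hxpos, Hconv, if_neg hcond1, if_pos hcond2]
      have he1 : exp (-x) * exp (-(t-x)) = exp (-t) := by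
        rw [← Real.exp_add]; congr 1; ring
      have he2 : exp (-x) * (exp (-(t-x)) * exp (-(t-x))) = exp (x - 2*t) := by
        rw [← Real.exp_add, ← Real.exp_add]; congr 1; ring
      linear_combination (-2 : ℝ) * he1 + he2
    rw [hsplit, hp1, hp2, int_f1, int_f2,
      show t - s - 2*t = -(s+t) by ring, show (0:ℝ) - 2*t = -(2*t) by ring,
      show t - 2*t = -t by ring, neg_zero, Real.exp_zero]
    ring
  · have hp : ∫ x in (0:ℝ)..t, g x
        = ∫ x in (0:ℝ)..t, (exp (-x) - 2*exp (-t) + exp (x - 2*t)) := by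
      rw [intervalIntegral.integral_of_le ht, intervalIntegral.integral_of_le ht,
        integral_Ioc_eq_integral_Ioo, integral_Ioc_eq_integral_Ioo]
      apply setIntegral_congr_fun measurableSet_Ioo
      intro x hx
      obtain ⟨hx0, hx1⟩ := hx
      push_neg at hst
      have hcond1 : ¬ s < t - x := by push_neg; linarith
      have hcond2 : 0 ≤ t - x := by linarith
      simp only [hgdef, if_pos hx0.le, Hconv, if_neg hcond1, if_pos hcond2]
      have he1 : exp (-x) * exp (-(t-x)) = exp (-t) := by
        rw [← Real.exp_add]; congr 1; ring
      have he2 : exp (-x) * (exp (-(t-x)) * exp (-(t-x))) = exp (x - 2*t) := by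
        rw [← Real.exp_add, ← Real.exp_add]; congr 1; ring
      linear_combination (-2 : ℝ) * he1 + he2
    rw [hp, int_f2, show t - 2*t = -t by ring, show (0:ℝ) - 2*t = -(2*t) by ring,
      neg_zero, Real.exp_zero]
    ring

lemma final_lt {s t : ℝ} (hs : 0 ≤ s) (ht : 0 ≤ t) (hst : s < t) :
    1/4*((Fexp t * (Fexp t * Fexp t)) - (3*Fexp (t-s)^2 - 2*Fexp (t-s)^3))
      + 3/4*((Fexp t * Fexp t) - (1 + exp (-(2*t)) - 2*exp (-(s+t)) - 2*s*exp (-t)))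
    = xiK s t := by
  unfold xiK Fexp
  rw [if_pos hst, if_neg (by linarith : ¬ t ≤ s), if_pos ht, if_pos (by linarith : (0:ℝ) ≤ t - s)]
  have hA : (0:ℝ) < exp s := Real.exp_pos s
  have hB : (0:ℝ) < exp t := Real.exp_pos t
  have e1 : exp (-t) = (exp t)⁻¹ := by rw [Real.exp_neg]
  have e2 : exp (-(t-s)) = exp s / exp t := by
    rw [show -(t-s) = s - t by ring, Real.exp_sub]
  have e3 : exp (-(2*t)) = (exp t * exp t)⁻¹ := by
    rw [Real.exp_neg, show (2:ℝ)*t = t + t by ring, Real.exp_add]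
  have e4 : exp (-(s+t)) = (exp s * exp t)⁻¹ := by rw [Real.exp_neg, Real.exp_add]
  have e5 : exp (-s - 3*t) = (exp s * (exp t * exp t * exp t))⁻¹ := by
    rw [show -s - 3*t = -(s + (t + t + t)) by ring, Real.exp_neg, Real.exp_add,
      Real.exp_add, Real.exp_add]
  have e6 : exp (4*s) = exp s * exp s * exp s * exp s := by
    rw [show (4:ℝ)*s = s + s + s + s by ring, Real.exp_add, Real.exp_add, Real.exp_add]
  have e7 : exp (2*t) = exp t * exp t := by rw [show (2:ℝ)*t = t + t by ring, Real.exp_add]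
  have e8 : exp (s+t) = exp s * exp t := Real.exp_add s t
  have e9 : exp (3*s+t) = exp s * exp s * exp s * exp t := by
    rw [show (3:ℝ)*s + t = s + s + s + t by ring, Real.exp_add, Real.exp_add, Real.exp_add]
  have e10 : exp (s+2*t) = exp s * (exp t * exp t) := by
    rw [show s + 2*t = s + (t + t) by ring, Real.exp_add, Real.exp_add]
  rw [e1, e2, e3, e4, e5, e6, e7, e8, e9, e10]
  field_simp
  ring

lemma final_ge {s t : ℝ} (hs : 0 ≤ s) (ht : 0 ≤ t) (hst : ¬ s < t) :
    1/4*((Fexp t * (Fexp t * Fexp t)) - (3*Fexp (t-s)^2 - 2*Fexp (t-s)^3))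
      + 3/4*((0:ℝ) - (1 - 2*t*exp (-t) - exp (-(2*t))))
    = xiK s t := by
  push_neg at hst
  have hF0 : Fexp (t - s) = 0 := by
    unfold Fexp
    split_ifs with h
    · rw [show t - s = 0 by linarith]; simp
    · rfl
  rw [hF0]
  unfold xiK Fexp
  rw [if_neg (by linarith : ¬ s < t), if_pos hst, if_pos ht]
  have hB : (0:ℝ) < exp t := Real.exp_pos t
  have e1 : exp (-t) = (exp t)⁻¹ := by rw [Real.exp_neg]
  have e3 : exp (-(2*t)) = (exp t * exp t)⁻¹ := by
    rw [Real.exp_neg, show (2:ℝ)*t = t + t by ring, Real.exp_add]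
  have e5 : exp (-(3*t)) = (exp t * exp t * exp t)⁻¹ := by
    rw [Real.exp_neg, show (3:ℝ)*t = t + t + t by ring, Real.exp_add, Real.exp_add]
  have e7 : exp (2*t) = exp t * exp t := by rw [show (2:ℝ)*t = t + t by ring, Real.exp_add]
  have e9 : exp (3*t) = exp t * exp t * exp t := by
    rw [show (3:ℝ)*t = t + t + t by ring, Real.exp_add, Real.exp_add]
  rw [e1, e3, e5, e7, e9]
  field_simp
  ring

/-- The projection of the family of kernels `Ξ(·,t)` on one coordinate under the null
hypothesis equals `ξ(s,t)`. Here `X 0, X 1, X 2` play the roles of `X₂, X₃, X₄`. -/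
theorem stmt_6 {Ω : Type*} [MeasurableSpace Ω] (P : Measure Ω) [IsProbabilityMeasure P]
    (X : Fin 3 → Ω → ℝ) (hXmeas : ∀ i, Measurable (X i))
    (hindep : iIndepFun X P)
    (hlaw : ∀ i, Measure.map (X i) P = expMeasure 1)
    (s t : ℝ) (hs : 0 ≤ s) (ht : 0 ≤ t) :
    (1/4) * ((P {ω | max (X 0 ω) (max (X 1 ω) (X 2 ω)) < t}).toReal
      - (P {ω | s + med (X 0 ω) (X 1 ω) (X 2 ω) < t}).toReal)
    + (3/4) * ((P {ω | max s (max (X 1 ω) (X 2 ω)) < t}).toReal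
      - (P {ω | X 0 ω + med s (X 1 ω) (X 2 ω) < t}).toReal)
    = xiK s t := by
  have hX : ∀ (i : Fin 3) (u : ℝ), P (X i ⁻¹' Iio u) = ENNReal.ofReal (Fexp u) := by
    intro i u
    rw [← Measure.map_apply (hXmeas i) measurableSet_Iio, hlaw i, expMeasure_Iio]
  have hP3 : ∀ (T : Fin 3 → Set ℝ), (∀ i, MeasurableSet (T i)) →
      P (X 0 ⁻¹' T 0 ∩ (X 1 ⁻¹' T 1 ∩ X 2 ⁻¹' T 2))
        = P (X 0 ⁻¹' T 0) * (P (X 1 ⁻¹' T 1) * P (X 2 ⁻¹' T 2)) := by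
    intro T hT
    have h := hindep.meas_iInter (s := fun i => X i ⁻¹' T i) (fun i => ⟨T i, hT i, rfl⟩)
    rw [iInter_fin3 (fun i => X i ⁻¹' T i)] at h
    rw [h, Fin.prod_univ_three]; ring
  have h12 : ∀ u v : ℝ, P (X 1 ⁻¹' Iio u ∩ X 2 ⁻¹' Iio v)
      = ENNReal.ofReal (Fexp u * Fexp v) := by
    intro u v
    have h := hP3 ![univ, Iio u, Iio v] (by intro i; fin_cases i <;> simp)
    simp only [Matrix.cons_val_zero, Matrix.cons_val_one, Matrix.head_cons,
      Matrix.cons_val_two, Matrix.tail_cons, Set.preimage_univ, Set.univ_inter,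
      measure_univ, one_mul] at h
    rw [h, hX, hX, ← ENNReal.ofReal_mul (Fexp_nonneg u)]
  have h01 : ∀ u v : ℝ, P (X 0 ⁻¹' Iio u ∩ X 1 ⁻¹' Iio v)
      = ENNReal.ofReal (Fexp u * Fexp v) := by
    intro u v
    have h := hP3 ![Iio u, Iio v, univ] (by intro i; fin_cases i <;> simp)
    simp only [Matrix.cons_val_zero, Matrix.cons_val_one, Matrix.head_cons,
      Matrix.cons_val_two, Matrix.tail_cons, Set.preimage_univ, Set.inter_univ,
      measure_univ, mul_one] at h
    rw [h, hX, hX, ← ENNReal.ofReal_mul (Fexp_nonneg u)]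
  have h02 : ∀ u v : ℝ, P (X 0 ⁻¹' Iio u ∩ X 2 ⁻¹' Iio v)
      = ENNReal.ofReal (Fexp u * Fexp v) := by
    intro u v
    have h := hP3 ![Iio u, univ, Iio v] (by intro i; fin_cases i <;> simp)
    simp only [Matrix.cons_val_zero, Matrix.cons_val_one, Matrix.head_cons,
      Matrix.cons_val_two, Matrix.tail_cons, Set.preimage_univ, Set.univ_inter,
      measure_univ, one_mul] at h
    rw [h, hX, hX, ← ENNReal.ofReal_mul (Fexp_nonneg u)]
  have htr : ∀ u : ℝ, P (X 0 ⁻¹' Iio u ∩ (X 1 ⁻¹' Iio u ∩ X 2 ⁻¹' Iio u))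
      = ENNReal.ofReal (Fexp u * (Fexp u * Fexp u)) := by
    intro u
    have h := hP3 (fun _ => Iio u) (fun _ => measurableSet_Iio)
    rw [h, hX, hX, hX, ← ENNReal.ofReal_mul (Fexp_nonneg u), ← ENNReal.ofReal_mul (Fexp_nonneg u)]
  -- E1
  have hE1 : P {ω | max (X 0 ω) (max (X 1 ω) (X 2 ω)) < t}
      = ENNReal.ofReal (Fexp t * (Fexp t * Fexp t)) := by
    rw [show {ω | max (X 0 ω) (max (X 1 ω) (X 2 ω)) < t}
        = X 0 ⁻¹' Iio t ∩ (X 1 ⁻¹' Iio t ∩ X 2 ⁻¹' Iio t) by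
      ext ω; simp [max_lt_iff]]
    exact htr t
  -- E2
  have hE2 : P {ω | s + med (X 0 ω) (X 1 ω) (X 2 ω) < t}
      = ENNReal.ofReal (3 * Fexp (t-s)^2 - 2 * Fexp (t-s)^3) := by
    set u := t - s with hu
    set a := X 0 ⁻¹' Iio u with ha
    set b := X 1 ⁻¹' Iio u with hb
    set c := X 2 ⁻¹' Iio u with hc
    have hma : MeasurableSet a := hXmeas 0 measurableSet_Iio
    have hmb : MeasurableSet b := hXmeas 1 measurableSet_Iio
    have hmc : MeasurableSet c := hXmeas 2 measurableSet_Iio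
    have hset : {ω | s + med (X 0 ω) (X 1 ω) (X 2 ω) < t}
        = (a ∩ b) ∪ ((a ∩ c) ∪ (b ∩ c)) := by
      ext ω
      simp only [mem_setOf_eq, mem_union, mem_inter_iff, ha, hb, hc,
        mem_preimage, mem_Iio, ← lt_sub_iff_add_lt', ← hu]
      exact med_lt_iff _ _ _ u
    set p := Fexp u with hpdef
    have hp0 : 0 ≤ p := Fexp_nonneg u
    have hp1 : p ≤ 1 := Fexp_le_one u
    have hid1 : (a ∩ c) ∩ (b ∩ c) = a ∩ (b ∩ c) := by ext ω; simp only [mem_inter_iff]; tauto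
    have hid2 : (a ∩ b) ∩ ((a ∩ c) ∪ (b ∩ c)) = a ∩ (b ∩ c) := by
      ext ω; simp only [mem_inter_iff, mem_union]; tauto
    have m1 := measure_union_add_inter (μ := P) (a ∩ c) (hmb.inter hmc)
    have m2 := measure_union_add_inter (μ := P) (a ∩ b) ((hma.inter hmc).union (hmb.inter hmc))
    rw [hid1] at m1
    rw [hid2] at m2
    rw [h02 u u, h12 u u, htr u] at m1
    rw [h01 u u, htr u] at m2
    have key : P ((a ∩ b) ∪ ((a ∩ c) ∪ (b ∩ c))) + ENNReal.ofReal (p * (p * p))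
          + ENNReal.ofReal (p * (p * p))
        = ENNReal.ofReal (p * p) + (ENNReal.ofReal (p * p) + ENNReal.ofReal (p * p)) := by
      calc P ((a ∩ b) ∪ ((a ∩ c) ∪ (b ∩ c))) + ENNReal.ofReal (p * (p * p))
            + ENNReal.ofReal (p * (p * p))
          = (ENNReal.ofReal (p * p) + P ((a ∩ c) ∪ (b ∩ c))) + ENNReal.ofReal (p * (p * p)) := by
            rw [← m2]
        _ = ENNReal.ofReal (p * p) + (P ((a ∩ c) ∪ (b ∩ c)) + ENNReal.ofReal (p * (p * p))) := by
            ring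
        _ = ENNReal.ofReal (p * p) + (ENNReal.ofReal (p * p) + ENNReal.ofReal (p * p)) := by
            rw [m1]
    have key2 : ENNReal.ofReal (3 * p^2 - 2 * p^3) + ENNReal.ofReal (p * (p * p))
          + ENNReal.ofReal (p * (p * p))
        = ENNReal.ofReal (p * p) + (ENNReal.ofReal (p * p) + ENNReal.ofReal (p * p)) := by
      rw [← ENNReal.ofReal_add (by nlinarith) (by positivity),
        ← ENNReal.ofReal_add (by nlinarith) (by positivity),
        ← ENNReal.ofReal_add (by positivity) (by positivity),
        ← ENNReal.ofReal_add (by positivity) (by positivity)]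
      congr 1
      ring
    rw [hset]
    have hkk := key.trans key2.symm
    exact WithTop.add_right_cancel ENNReal.ofReal_ne_top
      (WithTop.add_right_cancel ENNReal.ofReal_ne_top hkk)
  -- E3
  have hE3 : P {ω | max s (max (X 1 ω) (X 2 ω)) < t}
      = if s < t then ENNReal.ofReal (Fexp t * Fexp t) else 0 := by
    split_ifs with hst
    · rw [show {ω | max s (max (X 1 ω) (X 2 ω)) < t} = X 1 ⁻¹' Iio t ∩ X 2 ⁻¹' Iio t by
        ext ω; simp [max_lt_iff, hst]]
      exact h12 t t
    · rw [show {ω | max s (max (X 1 ω) (X 2 ω)) < t} = (∅ : Set Ω) by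
        ext ω; simp [max_lt_iff]; intro h; exact absurd h hst]
      simp
  -- E4
  set g : ℝ → ℝ := fun x => (if 0 ≤ x then exp (-x) else 0) * Hconv s (t - x) with hgdef
  have hgmeas : Measurable g := by
    apply Measurable.mul
    · exact Measurable.ite measurableSet_Ici (by fun_prop) measurable_const
    · exact (measurable_Hconv s).comp (measurable_const.sub measurable_id)
  have hgnonneg : ∀ x, 0 ≤ g x := by
    intro x
    apply mul_nonneg
    · split_ifs <;> positivity
    · exact Hconv_nonneg hs _
  have hzero : ∀ x, x ∉ Icc 0 t → g x = 0 := by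
    intro x hx
    rw [mem_Icc, not_and_or] at hx
    rcases hx with hx | hx
    · rw [hgdef]; simp only [if_neg hx, zero_mul]
    · push_neg at hx
      rw [hgdef]
      simp only [Hconv_eq_zero hs (by linarith : t - x ≤ 0), mul_zero]
  have hind : g = (Icc 0 t).indicator g := by
    funext x
    by_cases hx : x ∈ Icc 0 t
    · rw [indicator_of_mem hx]
    · rw [indicator_of_notMem hx, hzero x hx]
  have hgint : Integrable g := by
    rw [hind, integrable_indicator_iff measurableSet_Icc]
    apply Measure.integrableOn_of_bounded (M := 1) measure_Icc_lt_top.ne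
      hgmeas.aestronglyMeasurable
    filter_upwards with x
    rw [Real.norm_eq_abs, abs_of_nonneg (hgnonneg x)]
    apply mul_le_one₀
    · split_ifs with h
      · exact Real.exp_le_one_iff.mpr (by linarith)
      · norm_num
    · exact Hconv_nonneg hs _
    · exact Hconv_le_one hs _
  have hE4 : P {ω | X 0 ω + med s (X 1 ω) (X 2 ω) < t} = ENNReal.ofReal (∫ x, g x) := by
    set Y : Ω → ℝ := fun ω => med s (X 1 ω) (X 2 ω) with hY
    have hgmed : Measurable (fun p : ℝ × ℝ => med s p.1 p.2) := by
      unfold med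
      fun_prop
    have hYmeas : Measurable Y := hgmed.comp ((hXmeas 1).prodMk (hXmeas 2))
    set ν : Measure ℝ := Measure.map Y P with hν
    haveI : IsProbabilityMeasure ν := Measure.isProbabilityMeasure_map hYmeas.aemeasurable
    have hνIio : ∀ u : ℝ, ν (Iio u) = ENNReal.ofReal (Hconv s u) := by
      intro u
      rw [hν, Measure.map_apply hYmeas measurableSet_Iio]
      by_cases hsu : s < u
      · have hset : Y ⁻¹' Iio u = X 1 ⁻¹' Iio u ∪ X 2 ⁻¹' Iio u := by
          ext ω
          simp only [mem_preimage, mem_Iio, hY, mem_union, med_lt_iff]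
          constructor
          · rintro (⟨_, h⟩ | ⟨_, h⟩ | ⟨h, _⟩) <;> tauto
          · rintro (h | h)
            · exact Or.inl ⟨hsu, h⟩
            · exact Or.inr (Or.inl ⟨hsu, h⟩)
        rw [hset]
        have m1 : P (X 1 ⁻¹' Iio u ∪ X 2 ⁻¹' Iio u) + P (X 1 ⁻¹' Iio u ∩ X 2 ⁻¹' Iio u)
            = P (X 1 ⁻¹' Iio u) + P (X 2 ⁻¹' Iio u) :=
          measure_union_add_inter _ (hXmeas 2 measurableSet_Iio)
        rw [h12 u u, hX 1 u, hX 2 u] at m1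
        have hu0 : 0 ≤ u := le_of_lt (lt_of_le_of_lt hs hsu)
        have hfx : Fexp u = 1 - exp (-u) := if_pos hu0
        have key2 : ENNReal.ofReal (Hconv s u) + ENNReal.ofReal (Fexp u * Fexp u)
            = ENNReal.ofReal (Fexp u) + ENNReal.ofReal (Fexp u) := by
          rw [← ENNReal.ofReal_add (Hconv_nonneg hs u)
              (mul_nonneg (Fexp_nonneg u) (Fexp_nonneg u)),
            ← ENNReal.ofReal_add (Fexp_nonneg u) (Fexp_nonneg u)]
          congr 1
          rw [hfx]
          unfold Hconv
          rw [if_pos hsu]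
          have hee : exp (-(2*u)) = exp (-u) * exp (-u) := by
            rw [← Real.exp_add]; congr 1; ring
          rw [hee]; ring
        exact WithTop.add_right_cancel ENNReal.ofReal_ne_top (m1.trans key2.symm)
      · have hset : Y ⁻¹' Iio u = X 1 ⁻¹' Iio u ∩ X 2 ⁻¹' Iio u := by
          ext ω
          simp only [mem_preimage, mem_Iio, hY, mem_inter_iff, med_lt_iff]
          constructor
          · rintro (⟨h, _⟩ | ⟨h, _⟩ | h) <;> first | exact absurd h hsu | exact h
          · rintro ⟨h1, h2⟩; exact Or.inr (Or.inr ⟨h1, h2⟩)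
        rw [hset, h12 u u]
        congr 1
        unfold Hconv Fexp
        rw [if_neg hsu]
        split_ifs with h0
        · ring
        · ring
    have hpair : IndepFun (fun ω => (X 1 ω, X 2 ω)) (X 0) P :=
      hindep.indepFun_prodMk hXmeas 1 2 0 (by decide) (by decide)
    have hindepYX : IndepFun (X 0) Y P := (hpair.comp hgmed measurable_id).symm
    have hmap : Measure.map (fun ω => (X 0 ω, Y ω)) P = (expMeasure 1).prod ν := by
      rw [← hlaw 0, hν]
      exact (indepFun_iff_map_prod_eq_prod_map_map (hXmeas 0).aemeasurable
        hYmeas.aemeasurable).mp hindepYX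
    have hmS : MeasurableSet {p : ℝ × ℝ | p.1 + p.2 < t} :=
      measurableSet_lt (measurable_fst.add measurable_snd) measurable_const
    have step1 : P {ω | X 0 ω + Y ω < t}
        = (expMeasure 1).prod ν {p : ℝ × ℝ | p.1 + p.2 < t} := by
      rw [← hmap, Measure.map_apply ((hXmeas 0).prodMk hYmeas) hmS]
      rfl
    have step2 : (expMeasure 1).prod ν {p : ℝ × ℝ | p.1 + p.2 < t}
        = ∫⁻ x, ENNReal.ofReal (Hconv s (t - x)) ∂(expMeasure 1) := by
      rw [Measure.prod_apply hmS]
      congr 1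
      funext x
      rw [show Prod.mk x ⁻¹' {p : ℝ × ℝ | p.1 + p.2 < t} = Iio (t - x) by
        ext y; simp [lt_sub_iff_add_lt']]
      exact hνIio (t - x)
    have step3 : ∫⁻ x, ENNReal.ofReal (Hconv s (t - x)) ∂(expMeasure 1)
        = ∫⁻ x, ENNReal.ofReal (g x) := by
      rw [expMeasure, gammaMeasure]
      have hg : Measurable (fun x => ENNReal.ofReal (Hconv s (t - x))) :=
        ENNReal.measurable_ofReal.comp
          ((measurable_Hconv s).comp (measurable_const.sub measurable_id))
      have hpdfmeas : Measurable (gammaPDF 1 1) := by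
        unfold gammaPDF
        exact (measurable_gammaPDFReal 1 1).ennreal_ofReal
      rw [lintegral_withDensity_eq_lintegral_mul _ hpdfmeas hg]
      congr 1
      funext x
      have h1 : gammaPDF 1 1 x = exponentialPDF 1 x := rfl
      simp only [Pi.mul_apply, h1, exponentialPDF_eq, hgdef]
      rw [← ENNReal.ofReal_mul (by split_ifs <;> positivity)]
      congr 2
      split_ifs with h
      · simp
      · simp
    have step4 : ∫⁻ x, ENNReal.ofReal (g x) = ENNReal.ofReal (∫ x, g x) :=
      (MeasureTheory.ofReal_integral_eq_lintegral_ofReal hgint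
        (Filter.Eventually.of_forall hgnonneg)).symm
    rw [show {ω | X 0 ω + med s (X 1 ω) (X 2 ω) < t} = {ω | X 0 ω + Y ω < t} from rfl,
      step1, step2, step3, step4]
  -- assemble
  have hJnonneg : 0 ≤ ∫ x, g x := integral_nonneg hgnonneg
  have hJ := Jval hs ht hgint hzero
  rw [hE1, hE2, hE3, hE4]
  rcases lt_or_ge s t with hst | hst
  · rw [if_pos hst]
    rw [ENNReal.toReal_ofReal (mul_nonneg (Fexp_nonneg t) (mul_nonneg (Fexp_nonneg t) (Fexp_nonneg t))),
      ENNReal.toReal_ofReal (by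
        have h0 := Fexp_nonneg (t-s); have h1 := Fexp_le_one (t-s); nlinarith),
      ENNReal.toReal_ofReal (mul_nonneg (Fexp_nonneg t) (Fexp_nonneg t)),
      ENNReal.toReal_ofReal hJnonneg, hJ, if_pos hst]
    exact final_lt hs ht hst
  · rw [if_neg (not_lt.mpr hst)]
    rw [ENNReal.toReal_ofReal (mul_nonneg (Fexp_nonneg t) (mul_nonneg (Fexp_nonneg t) (Fexp_nonneg t))),
      ENNReal.toReal_ofReal (by
        have h0 := Fexp_nonneg (t-s); have h1 := Fexp_le_one (t-s); nlinarith),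
      ENNReal.toReal_ofReal hJnonneg, hJ, if_neg (not_lt.mpr hst)]
    simp only [ENNReal.toReal_zero]
    exact final_ge hs ht (not_lt.mpr hst)
end

section
/- Let h : [0,∞) → ℝ be a bounded continuous function with ∫₀^∞ h(x) dx = 0, and set H(y) = ∫₀^y h(s) ds. For θ in a neighborhood of 0 define g(x,θ) = e^{−x} + θ·h(x), G(y,θ) = 1 − e^{−y} + θ·H(y), and for t > 0 define a(t,θ) = G(t,θ)³ − 6∫₀^t g(x,θ)·(∫₀^{t−x} G(y,θ)·(1 − G(y,θ))·g(y,θ) dy) dx. Then for each t > 0 the map θ ↦ a(t,θ) is differentiable at θ = 0 with derivative ∂a/∂θ(t,0) = 4·∫₀^∞ h(x)·ξ(x,t) dx. -/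
open Real MeasureTheory Set

lemma kernel_id (s t : ℝ) :
    3*(1-exp (-t))^2 - 6*(1/6 - exp (-(2*(t-s)))/2 + exp (-(3*(t-s)))/3)
      - 6*exp (-t)*(t+exp (-t)-1) + 6*exp (-t)*(s+exp (-s)-1)
    = 4 * ((1/4) * exp (-s - 3*t) *
      (-exp s - 2 * exp (4*s) + 6 * exp (2*t) + 3 * exp (s+t) + 3 * exp (3*s+t)
        - exp (s + 2*t) * (9 - 6*s)))
      - 4 * ((1/4) * exp (-(3*t)) * (-1 + 6 * exp t - 2 * exp (3*t) - exp (2*t) * (3 - 6*t))) := by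
  rw [show -s-3*t = -s + -t + -t + -t by ring, show -(2*(t-s)) = s + s + -t + -t by ring,
      show -(3*(t-s)) = s+s+s+ -t + -t + -t by ring, show -(3*t) = -t + -t + -t by ring,
      show (4:ℝ)*s = s+s+s+s by ring, show (2:ℝ)*t = t+t by ring,
      show (3:ℝ)*s+t = s+s+s+t by ring, show (3:ℝ)*t = t+t+t by ring]
  simp only [Real.exp_add, Real.exp_neg]
  have hs := Real.exp_ne_zero s
  have ht := Real.exp_ne_zero t
  field_simp
  ring

/-- closed form for the zeroth-order inner integral -/
lemma I0_eval (u : ℝ) :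
    (∫ y in (0:ℝ)..u, (1 - exp (-y)) * exp (-y) * exp (-y))
      = 1/6 - exp (-(2*u))/2 + exp (-(3*u))/3 := by
  have hd : ∀ y : ℝ, HasDerivAt (fun y : ℝ => -(exp (-(2*y))/2) + exp (-(3*y))/3)
      ((1 - exp (-y)) * exp (-y) * exp (-y)) y := by
    intro y
    have h2 : HasDerivAt (fun y : ℝ => exp (-(2*y))) (exp (-(2*y)) * (-2)) y := by
      have : HasDerivAt (fun y : ℝ => -(2*y)) (-2) y := by
        simpa using ((hasDerivAt_id y).const_mul (-2:ℝ))
      simpa [mul_comm] using this.exp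
    have h3 : HasDerivAt (fun y : ℝ => exp (-(3*y))) (exp (-(3*y)) * (-3)) y := by
      have : HasDerivAt (fun y : ℝ => -(3*y)) (-3) y := by
        simpa using ((hasDerivAt_id y).const_mul (-3:ℝ))
      simpa [mul_comm] using this.exp
    have := ((h2.div_const 2).neg).add (h3.div_const 3)
    refine this.congr_deriv ?_
    have e2 : exp (-y) * exp (-y) = exp (-(2*y)) := by rw [← Real.exp_add]; ring_nf
    have e3 : exp (-y) * exp (-y) * exp (-y) = exp (-(3*y)) := by
      rw [← Real.exp_add, ← Real.exp_add]; ring_nf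
    rw [← e2, ← e3]; ring
  rw [intervalIntegral.integral_eq_sub_of_hasDerivAt (fun y _ => hd y)
    (by apply Continuous.intervalIntegrable; continuity)]
  simp
  ring

lemma poly_hasDerivAt (c0 c1 c2 c3 c4 : ℝ) :
    HasDerivAt (fun θ : ℝ => c0 + c1*θ + c2*θ^2 + c3*θ^3 + c4*θ^4) c1 0 := by
  have d1 : HasDerivAt (fun θ : ℝ => c1 * θ) c1 0 := by
    simpa using (hasDerivAt_id' (𝕜 := ℝ) (x := 0)).const_mul c1
  have d2 : HasDerivAt (fun θ : ℝ => c2 * θ^2) 0 0 := by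
    simpa using (hasDerivAt_pow 2 (0:ℝ)).const_mul c2
  have d3 : HasDerivAt (fun θ : ℝ => c3 * θ^3) 0 0 := by
    simpa using (hasDerivAt_pow 3 (0:ℝ)).const_mul c3
  have d4 : HasDerivAt (fun θ : ℝ => c4 * θ^4) 0 0 := by
    simpa using (hasDerivAt_pow 4 (0:ℝ)).const_mul c4
  have hsum := ((((hasDerivAt_const (0:ℝ) c0).add d1).add d2).add d3).add d4
  exact hsum.congr_deriv (by ring)

/-- Derivative at `θ = 0` of `a(t,θ)` built from the perturbed density
`g(x,θ) = e^{−x} + θh(x)`: it equals `4·∫₀^∞ h(x)ξ(x,t) dx` for every `t > 0`. -/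
theorem stmt_8 (h : ℝ → ℝ)
    (hbd : ∃ M : ℝ, ∀ x, 0 ≤ x → |h x| ≤ M)
    (hcont : ContinuousOn h (Ici 0))
    (hint : IntegrableOn h (Ioi 0))
    (hzero : (∫ x in Ioi (0:ℝ), h x) = 0)
    (H : ℝ → ℝ) (Hdef : ∀ y, H y = ∫ s in (0:ℝ)..y, h s)
    (g : ℝ → ℝ → ℝ) (gdef : ∀ θ x, g θ x = exp (-x) + θ * h x)
    (G : ℝ → ℝ → ℝ) (Gdef : ∀ θ y, G θ y = 1 - exp (-y) + θ * H y)
    (a : ℝ → ℝ → ℝ)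
    (adef : ∀ t θ, a t θ = (G θ t)^3 - 6 * ∫ x in (0:ℝ)..t, g θ x *
        ∫ y in (0:ℝ)..(t - x), G θ y * (1 - G θ y) * g θ y) :
    ∀ t : ℝ, 0 < t →
      HasDerivAt (fun θ => a t θ) (4 * ∫ x in Ioi (0:ℝ), h x * xiK x t) 0 := by
  intro t ht
  have hIcc : Icc (0:ℝ) t ⊆ Ici 0 := fun x hx => hx.1
  have hhC : ContinuousOn h (Icc 0 t) := hcont.mono hIcc
  have hHeq : H = fun y => ∫ s in (0:ℝ)..y, h s := funext Hdef
  have hH0 : H 0 = 0 := by rw [Hdef]; simp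
  have hHC : ContinuousOn H (Icc 0 t) := by
    rw [hHeq]
    have h1 : IntegrableOn h (uIcc 0 t) := by
      rw [uIcc_of_le ht.le]; exact hhC.integrableOn_compact isCompact_Icc
    have := intervalIntegral.continuousOn_primitive_interval (μ := volume) h1
    rwa [uIcc_of_le ht.le] at this
  have hHderiv : ∀ v : ℝ, 0 < v → HasDerivAt H (h v) v := by
    intro v hv
    have hsub : uIcc (0:ℝ) v ⊆ Ici 0 := by
      rw [uIcc_of_le hv.le]; exact fun x hx => hx.1
    have h1 : IntervalIntegrable h volume 0 v := (hcont.mono hsub).intervalIntegrable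
    have h2 : StronglyMeasurableAtFilter h (nhds v) volume :=
      (hcont.mono (fun x (hx : x ∈ Ioi (0:ℝ)) => mem_Ici.mpr (le_of_lt hx))).stronglyMeasurableAtFilter
        isOpen_Ioi v hv
    have h3 : ContinuousAt h v :=
      (hcont.mono (fun x (hx : x ∈ Ioi (0:ℝ)) => mem_Ici.mpr (le_of_lt hx))).continuousAt (Ioi_mem_nhds hv)
    have h4 := intervalIntegral.integral_hasDerivAt_right h1 h2 h3
    rw [hHeq]; exact h4
  -- interval integrability helper
  have hII : ∀ (f : ℝ → ℝ), ContinuousOn f (Icc 0 t) → ∀ u ∈ Icc (0:ℝ) t,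
      IntervalIntegrable f volume 0 u := by
    intro f hf u hu
    apply ContinuousOn.intervalIntegrable
    rw [uIcc_of_le hu.1]
    exact hf.mono (Icc_subset_Icc le_rfl hu.2)
  have hE : Continuous (fun y : ℝ => exp (-y)) := by continuity
  -- continuity of the coefficient functions
  have hp0C : Continuous (fun y : ℝ => (1 - exp (-y)) * exp (-y) * exp (-y)) := by continuity
  have hp1C : ContinuousOn
      (fun y : ℝ => H y * (2*exp (-y) - 1) * exp (-y) + (1 - exp (-y)) * exp (-y) * h y)
      (Icc 0 t) :=
    (((hHC.mul ((continuous_const.mul hE).sub continuous_const).continuousOn).mul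
      hE.continuousOn)).add ((((continuous_const.sub hE).mul hE).continuousOn).mul hhC)
  have hp2C : ContinuousOn
      (fun y : ℝ => -(H y^2) * exp (-y) + H y * (2*exp (-y) - 1) * h y) (Icc 0 t) :=
    (((hHC.pow 2).neg).mul hE.continuousOn).add
      ((hHC.mul ((continuous_const.mul hE).sub continuous_const).continuousOn).mul hhC)
  have hp3C : ContinuousOn (fun y : ℝ => -(H y^2) * h y) (Icc 0 t) :=
    ((hHC.pow 2).neg).mul hhC
  -- inner integral expansion in θ
  have hinner : ∀ (θ : ℝ), ∀ u ∈ Icc (0:ℝ) t,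
      (∫ y in (0:ℝ)..u, G θ y * (1 - G θ y) * g θ y)
        = (∫ y in (0:ℝ)..u, (1 - exp (-y)) * exp (-y) * exp (-y))
          + θ * (∫ y in (0:ℝ)..u, H y * (2*exp (-y) - 1) * exp (-y)
              + (1 - exp (-y)) * exp (-y) * h y)
          + θ^2 * (∫ y in (0:ℝ)..u, -(H y^2) * exp (-y) + H y * (2*exp (-y) - 1) * h y)
          + θ^3 * (∫ y in (0:ℝ)..u, -(H y^2) * h y) := by
    intro θ u hu
    have e0 := hII _ hp0C.continuousOn u hu
    have e1 := hII _ hp1C u hu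
    have e2 := hII _ hp2C u hu
    have e3 := hII _ hp3C u hu
    have hEq : EqOn (fun y => G θ y * (1 - G θ y) * g θ y)
        (fun y => (1 - exp (-y)) * exp (-y) * exp (-y)
          + θ * (H y * (2*exp (-y) - 1) * exp (-y) + (1 - exp (-y)) * exp (-y) * h y)
          + θ^2 * (-(H y^2) * exp (-y) + H y * (2*exp (-y) - 1) * h y)
          + θ^3 * (-(H y^2) * h y)) (uIcc 0 u) := by
      intro y _
      simp only [Gdef, gdef]
      ring
    rw [intervalIntegral.integral_congr hEq,
        intervalIntegral.integral_add ((e0.add (e1.const_mul θ)).add (e2.const_mul (θ^2)))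
          (e3.const_mul (θ^3)),
        intervalIntegral.integral_add (e0.add (e1.const_mul θ)) (e2.const_mul (θ^2)),
        intervalIntegral.integral_add e0 (e1.const_mul θ),
        intervalIntegral.integral_const_mul, intervalIntegral.integral_const_mul,
        intervalIntegral.integral_const_mul]
  -- continuity of the primitives u ↦ ∫_0^u p_k
  have hprim : ∀ (p : ℝ → ℝ), ContinuousOn p (Icc 0 t) →
      ContinuousOn (fun u => ∫ y in (0:ℝ)..u, p y) (Icc 0 t) := by
    intro p hp
    have h1 : IntegrableOn p (uIcc 0 t) := by
      rw [uIcc_of_le ht.le]; exact hp.integrableOn_compact isCompact_Icc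
    have := intervalIntegral.continuousOn_primitive_interval (μ := volume) h1
    rwa [uIcc_of_le ht.le] at this
  have hmaps : MapsTo (fun x : ℝ => t - x) (Icc 0 t) (Icc 0 t) := by
    intro x hx
    have h1 := hx.1; have h2 := hx.2
    exact ⟨by simp only; linarith, by simp only; linarith⟩
  have hcomp : ∀ (p : ℝ → ℝ), ContinuousOn p (Icc 0 t) →
      ContinuousOn (fun x => ∫ y in (0:ℝ)..(t - x), p y) (Icc 0 t) := by
    intro p hp
    exact (hprim p hp).comp (continuous_const.sub continuous_id).continuousOn hmaps
  -- integrability of products f(x) * ∫_0^{t-x} p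
  have iMk : ∀ (f p : ℝ → ℝ), ContinuousOn f (Icc 0 t) → ContinuousOn p (Icc 0 t) →
      IntervalIntegrable (fun x => f x * ∫ y in (0:ℝ)..(t-x), p y) volume 0 t :=
    fun f p hf hp => hII _ (hf.mul (hcomp _ hp)) t ⟨ht.le, le_rfl⟩
  have iE0 := iMk _ _ hE.continuousOn hp0C.continuousOn
  have iE1 := iMk _ _ hE.continuousOn hp1C
  have iE2 := iMk _ _ hE.continuousOn hp2C
  have iE3 := iMk _ _ hE.continuousOn hp3C
  have iH0 := iMk _ _ hhC hp0C.continuousOn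
  have iH1 := iMk _ _ hhC hp1C
  have iH2 := iMk _ _ hhC hp2C
  have iH3 := iMk _ _ hhC hp3C
  -- outer integral expansion in θ
  have houter : ∀ θ : ℝ,
      (∫ x in (0:ℝ)..t, g θ x * ∫ y in (0:ℝ)..(t - x), G θ y * (1 - G θ y) * g θ y)
      = (∫ x in (0:ℝ)..t, exp (-x) * ∫ y in (0:ℝ)..(t-x),
            (1 - exp (-y)) * exp (-y) * exp (-y))
        + θ * ((∫ x in (0:ℝ)..t, h x * ∫ y in (0:ℝ)..(t-x),
              (1 - exp (-y)) * exp (-y) * exp (-y))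
          + (∫ x in (0:ℝ)..t, exp (-x) * ∫ y in (0:ℝ)..(t-x),
              H y * (2*exp (-y) - 1) * exp (-y) + (1 - exp (-y)) * exp (-y) * h y))
        + θ^2 * ((∫ x in (0:ℝ)..t, h x * ∫ y in (0:ℝ)..(t-x),
              H y * (2*exp (-y) - 1) * exp (-y) + (1 - exp (-y)) * exp (-y) * h y)
          + (∫ x in (0:ℝ)..t, exp (-x) * ∫ y in (0:ℝ)..(t-x),
              -(H y^2) * exp (-y) + H y * (2*exp (-y) - 1) * h y))
        + θ^3 * ((∫ x in (0:ℝ)..t, h x * ∫ y in (0:ℝ)..(t-x),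
              -(H y^2) * exp (-y) + H y * (2*exp (-y) - 1) * h y)
          + (∫ x in (0:ℝ)..t, exp (-x) * ∫ y in (0:ℝ)..(t-x), -(H y^2) * h y))
        + θ^4 * (∫ x in (0:ℝ)..t, h x * ∫ y in (0:ℝ)..(t-x), -(H y^2) * h y) := by
    intro θ
    have hEq : EqOn
        (fun x => g θ x * ∫ y in (0:ℝ)..(t - x), G θ y * (1 - G θ y) * g θ y)
        (fun x =>
          (exp (-x) * ∫ y in (0:ℝ)..(t-x), (1 - exp (-y)) * exp (-y) * exp (-y))
          + θ * ((h x * ∫ y in (0:ℝ)..(t-x), (1 - exp (-y)) * exp (-y) * exp (-y))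
            + (exp (-x) * ∫ y in (0:ℝ)..(t-x),
                H y * (2*exp (-y) - 1) * exp (-y) + (1 - exp (-y)) * exp (-y) * h y))
          + θ^2 * ((h x * ∫ y in (0:ℝ)..(t-x),
                H y * (2*exp (-y) - 1) * exp (-y) + (1 - exp (-y)) * exp (-y) * h y)
            + (exp (-x) * ∫ y in (0:ℝ)..(t-x),
                -(H y^2) * exp (-y) + H y * (2*exp (-y) - 1) * h y))
          + θ^3 * ((h x * ∫ y in (0:ℝ)..(t-x),
                -(H y^2) * exp (-y) + H y * (2*exp (-y) - 1) * h y)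
            + (exp (-x) * ∫ y in (0:ℝ)..(t-x), -(H y^2) * h y))
          + θ^4 * (h x * ∫ y in (0:ℝ)..(t-x), -(H y^2) * h y)) (uIcc 0 t) := by
      intro x hx
      rw [uIcc_of_le ht.le] at hx
      have hu : t - x ∈ Icc (0:ℝ) t := by
        have h1 := hx.1; have h2 := hx.2
        exact ⟨by linarith, by linarith⟩
      simp only
      rw [hinner θ (t-x) hu, gdef]
      ring
    rw [intervalIntegral.integral_congr hEq]
    rw [intervalIntegral.integral_add (((iE0.add ((iH0.add iE1).const_mul θ)).add
          ((iH1.add iE2).const_mul (θ^2))).add ((iH2.add iE3).const_mul (θ^3)))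
          (iH3.const_mul (θ^4)),
        intervalIntegral.integral_add ((iE0.add ((iH0.add iE1).const_mul θ)).add
          ((iH1.add iE2).const_mul (θ^2))) ((iH2.add iE3).const_mul (θ^3)),
        intervalIntegral.integral_add (iE0.add ((iH0.add iE1).const_mul θ))
          ((iH1.add iE2).const_mul (θ^2)),
        intervalIntegral.integral_add iE0 ((iH0.add iE1).const_mul θ),
        intervalIntegral.integral_const_mul, intervalIntegral.integral_const_mul,
        intervalIntegral.integral_const_mul, intervalIntegral.integral_const_mul,
        intervalIntegral.integral_add iH0 iE1, intervalIntegral.integral_add iH1 iE2,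
        intervalIntegral.integral_add iH2 iE3]
  -- name the coefficient integrals
  set JE0 := ∫ x in (0:ℝ)..t, exp (-x) * ∫ y in (0:ℝ)..(t-x),
      (1 - exp (-y)) * exp (-y) * exp (-y) with hJE0
  set JH0 := ∫ x in (0:ℝ)..t, h x * ∫ y in (0:ℝ)..(t-x),
      (1 - exp (-y)) * exp (-y) * exp (-y) with hJH0
  set JE1 := ∫ x in (0:ℝ)..t, exp (-x) * ∫ y in (0:ℝ)..(t-x),
      H y * (2*exp (-y) - 1) * exp (-y) + (1 - exp (-y)) * exp (-y) * h y with hJE1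
  set JH1 := ∫ x in (0:ℝ)..t, h x * ∫ y in (0:ℝ)..(t-x),
      H y * (2*exp (-y) - 1) * exp (-y) + (1 - exp (-y)) * exp (-y) * h y with hJH1
  set JE2 := ∫ x in (0:ℝ)..t, exp (-x) * ∫ y in (0:ℝ)..(t-x),
      -(H y^2) * exp (-y) + H y * (2*exp (-y) - 1) * h y with hJE2
  set JH2 := ∫ x in (0:ℝ)..t, h x * ∫ y in (0:ℝ)..(t-x),
      -(H y^2) * exp (-y) + H y * (2*exp (-y) - 1) * h y with hJH2
  set JE3 := ∫ x in (0:ℝ)..t, exp (-x) * ∫ y in (0:ℝ)..(t-x), -(H y^2) * h y with hJE3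
  set JH3 := ∫ x in (0:ℝ)..t, h x * ∫ y in (0:ℝ)..(t-x), -(H y^2) * h y with hJH3
  have key : ∀ θ : ℝ, a t θ =
      ((1 - exp (-t))^3 - 6 * JE0)
      + (3*(1 - exp (-t))^2 * H t - 6 * (JH0 + JE1)) * θ
      + (3*(1 - exp (-t)) * (H t)^2 - 6 * (JH1 + JE2)) * θ^2
      + ((H t)^3 - 6 * (JH2 + JE3)) * θ^3
      + (-6 * JH3) * θ^4 := by
    intro θ
    rw [adef, Gdef, houter θ]
    ring
  have hpoly : HasDerivAt (fun θ => a t θ)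
      (3*(1 - exp (-t))^2 * H t - 6 * (JH0 + JE1)) 0 := by
    have hfun : (fun θ => a t θ) = fun θ : ℝ =>
        ((1 - exp (-t))^3 - 6 * JE0)
        + (3*(1 - exp (-t))^2 * H t - 6 * (JH0 + JE1)) * θ
        + (3*(1 - exp (-t)) * (H t)^2 - 6 * (JH1 + JE2)) * θ^2
        + ((H t)^3 - 6 * (JH2 + JE3)) * θ^3
        + (-6 * JH3) * θ^4 := funext key
    rw [hfun]
    exact poly_hasDerivAt _ _ _ _ _
  -- ===== value identification =====
  -- basic derivative facts
  have hE2 : Continuous (fun v : ℝ => exp (-(2*v))) :=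
    Real.continuous_exp.comp ((continuous_const.mul continuous_id).neg)
  have hWc : Continuous (fun v : ℝ => v + exp (-v) - 1) :=
    (continuous_id.add hE).sub continuous_const
  have hqd : ∀ x : ℝ, HasDerivAt (fun v : ℝ => exp (-v) - exp (-(2*v)))
      (-exp (-x) + 2*exp (-(2*x))) x := by
    intro x
    have h1 : HasDerivAt (fun v : ℝ => exp (-v)) (-exp (-x)) x := by
      have : HasDerivAt (fun v : ℝ => -v) (-1) x := by exact (hasDerivAt_id x).neg
      simpa [mul_comm] using this.exp
    have h2 : HasDerivAt (fun v : ℝ => exp (-(2*v))) (exp (-(2*x)) * (-2)) x := by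
      have : HasDerivAt (fun v : ℝ => -(2*v)) (-2) x := by
        simpa using ((hasDerivAt_id x).const_mul (-2:ℝ))
      simpa [mul_comm] using this.exp
    have h3 := h1.sub h2
    exact h3.congr_deriv (by ring)
  have hWd : ∀ x : ℝ, HasDerivAt (fun v : ℝ => v + exp (-v) - 1) (1 - exp (-x)) x := by
    intro x
    have h1 : HasDerivAt (fun v : ℝ => exp (-v)) (-exp (-x)) x := by
      have : HasDerivAt (fun v : ℝ => -v) (-1) x := by exact (hasDerivAt_id x).neg
      simpa [mul_comm] using this.exp
    have h3 := ((hasDerivAt_id' (𝕜 := ℝ) (x := x)).add h1).sub_const 1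
    exact h3.congr_deriv (by ring)
  -- the first-order inner integral evaluates to H u * q u
  have hI1 : ∀ u ∈ Icc (0:ℝ) t,
      (∫ y in (0:ℝ)..u, H y * (2*exp (-y) - 1) * exp (-y) + (1 - exp (-y)) * exp (-y) * h y)
        = H u * (exp (-u) - exp (-(2*u))) := by
    intro u hu
    have hcontF : ContinuousOn (fun v => H v * (exp (-v) - exp (-(2*v)))) (Icc 0 u) :=
      (hHC.mono (Icc_subset_Icc le_rfl hu.2)).mul
        ((hE.sub hE2).continuousOn)
    have hderivF : ∀ x ∈ Ioo (0:ℝ) u, HasDerivWithinAt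
        (fun v => H v * (exp (-v) - exp (-(2*v))))
        (H x * (2*exp (-x) - 1) * exp (-x) + (1 - exp (-x)) * exp (-x) * h x) (Ioi x) x := by
      intro x hx
      have hprod := (hHderiv x hx.1).mul (hqd x)
      have heq : h x * (exp (-x) - exp (-(2*x))) + H x * (-exp (-x) + 2*exp (-(2*x)))
          = H x * (2*exp (-x) - 1) * exp (-x) + (1 - exp (-x)) * exp (-x) * h x := by
        have e2 : exp (-x) * exp (-x) = exp (-(2*x)) := by rw [← Real.exp_add]; ring_nf
        rw [← e2]; ring
      rw [← heq]
      exact hprod.hasDerivWithinAt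
    rw [intervalIntegral.integral_eq_sub_of_hasDeriv_right_of_le hu.1 hcontF hderivF
      (hII _ hp1C u hu)]
    simp [hH0]
  -- JH0 in closed-kernel form
  have hJH0' : JH0 = ∫ x in (0:ℝ)..t,
      h x * (1/6 - exp (-(2*(t-x)))/2 + exp (-(3*(t-x)))/3) := by
    rw [hJH0]
    apply intervalIntegral.integral_congr
    intro x _
    simp only
    rw [I0_eval]
  -- JE1 reduction
  have hJE1' : JE1 = exp (-t) * ∫ v in (0:ℝ)..t, H v * (1 - exp (-v)) := by
    rw [hJE1]
    have s1 : EqOn (fun x => exp (-x) * ∫ y in (0:ℝ)..(t-x),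
          H y * (2*exp (-y) - 1) * exp (-y) + (1 - exp (-y)) * exp (-y) * h y)
        (fun x => (fun v => exp (-(t - v)) * (H v * (exp (-v) - exp (-(2*v))))) (t - x))
        (uIcc 0 t) := by
      intro x hx
      rw [uIcc_of_le ht.le] at hx
      have h1 := hx.1; have h2 := hx.2
      have hu : t - x ∈ Icc (0:ℝ) t := ⟨by linarith, by linarith⟩
      simp only
      rw [hI1 _ hu, show t - (t - x) = x by ring]
    rw [intervalIntegral.integral_congr s1,
        intervalIntegral.integral_comp_sub_left
          (fun v => exp (-(t - v)) * (H v * (exp (-v) - exp (-(2*v))))) t,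
        sub_self, sub_zero]
    have s2 : EqOn (fun v => exp (-(t - v)) * (H v * (exp (-v) - exp (-(2*v)))))
        (fun v => exp (-t) * (H v * (1 - exp (-v)))) (uIcc 0 t) := by
      intro v _
      simp only
      have A1 : exp (-(t-v)) * exp (-v) = exp (-t) := by
        rw [← Real.exp_add]; congr 1; ring
      have A2 : exp (-(t-v)) * exp (-(2*v)) = exp (-t) * exp (-v) := by
        rw [← Real.exp_add, ← Real.exp_add]; congr 1; ring
      linear_combination H v * A1 - H v * A2
    rw [intervalIntegral.integral_congr s2, intervalIntegral.integral_const_mul]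
  -- integration by parts for ∫ H (1 - e^{-v})
  have ihW : IntervalIntegrable (fun v => h v * (v + exp (-v) - 1)) volume 0 t :=
    hII _ (hhC.mul hWc.continuousOn) t ⟨ht.le, le_rfl⟩
  have ihH : IntervalIntegrable (fun v => H v * (1 - exp (-v))) volume 0 t :=
    hII _ (hHC.mul (continuous_const.sub hE).continuousOn) t ⟨ht.le, le_rfl⟩
  have hparts : (∫ v in (0:ℝ)..t, (h v * (v + exp (-v) - 1) + H v * (1 - exp (-v))))
      = H t * (t + exp (-t) - 1) := by
    have hcontF : ContinuousOn (fun v => H v * (v + exp (-v) - 1)) (Icc 0 t) :=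
      hHC.mul hWc.continuousOn
    have hderivF : ∀ x ∈ Ioo (0:ℝ) t, HasDerivWithinAt
        (fun v => H v * (v + exp (-v) - 1))
        (h x * (x + exp (-x) - 1) + H x * (1 - exp (-x))) (Ioi x) x := by
      intro x hx
      exact ((hHderiv x hx.1).mul (hWd x)).hasDerivWithinAt
    rw [intervalIntegral.integral_eq_sub_of_hasDeriv_right_of_le ht.le hcontF hderivF
      (ihW.add ihH)]
    simp [hH0]
  have hHW : (∫ v in (0:ℝ)..t, H v * (1 - exp (-v)))
      = H t * (t + exp (-t) - 1) - ∫ v in (0:ℝ)..t, h v * (v + exp (-v) - 1) := by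
    rw [← hparts, intervalIntegral.integral_add ihW ihH]
    ring
  -- kernel integrand continuity
  have hKc : Continuous (fun s : ℝ =>
      3*(1-exp (-t))^2 - 6*(1/6 - exp (-(2*(t-s)))/2 + exp (-(3*(t-s)))/3)
        - 6*exp (-t)*(t+exp (-t)-1) + 6*exp (-t)*(s+exp (-s)-1)) := by fun_prop
  have hI0Kc : Continuous (fun s : ℝ =>
      1/6 - exp (-(2*(t-s)))/2 + exp (-(3*(t-s)))/3) := by fun_prop
  have ih : IntervalIntegrable h volume 0 t := hII _ hhC t ⟨ht.le, le_rfl⟩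
  have i0c : IntervalIntegrable
      (fun s => h s * (1/6 - exp (-(2*(t-s)))/2 + exp (-(3*(t-s)))/3)) volume 0 t :=
    hII _ (hhC.mul hI0Kc.continuousOn) t ⟨ht.le, le_rfl⟩
  have iK : IntervalIntegrable (fun s => h s *
      (3*(1-exp (-t))^2 - 6*(1/6 - exp (-(2*(t-s)))/2 + exp (-(3*(t-s)))/3)
        - 6*exp (-t)*(t+exp (-t)-1) + 6*exp (-t)*(s+exp (-s)-1))) volume 0 t :=
    hII _ (hhC.mul hKc.continuousOn) t ⟨ht.le, le_rfl⟩
  -- split the kernel integral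
  have hsplitK : (∫ s in (0:ℝ)..t, h s *
      (3*(1-exp (-t))^2 - 6*(1/6 - exp (-(2*(t-s)))/2 + exp (-(3*(t-s)))/3)
        - 6*exp (-t)*(t+exp (-t)-1) + 6*exp (-t)*(s+exp (-s)-1)))
      = (3*(1-exp (-t))^2 - 6*exp (-t)*(t+exp (-t)-1)) * (∫ s in (0:ℝ)..t, h s)
        - 6 * (∫ s in (0:ℝ)..t, h s * (1/6 - exp (-(2*(t-s)))/2 + exp (-(3*(t-s)))/3))
        + 6*exp (-t) * (∫ s in (0:ℝ)..t, h s * (s + exp (-s) - 1)) := by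
    rw [← intervalIntegral.integral_const_mul, ← intervalIntegral.integral_const_mul,
        ← intervalIntegral.integral_const_mul,
        ← intervalIntegral.integral_sub (ih.const_mul _) (i0c.const_mul _),
        ← intervalIntegral.integral_add ((ih.const_mul _).sub (i0c.const_mul _))
          (ihW.const_mul _)]
    apply intervalIntegral.integral_congr
    intro s _
    simp only
    ring
  have hLHS : 3*(1 - exp (-t))^2 * H t - 6*(JH0 + JE1)
      = ∫ s in (0:ℝ)..t, h s *
        (3*(1-exp (-t))^2 - 6*(1/6 - exp (-(2*(t-s)))/2 + exp (-(3*(t-s)))/3)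
          - 6*exp (-t)*(t+exp (-t)-1) + 6*exp (-t)*(s+exp (-s)-1)) := by
    rw [hsplitK, hJH0', hJE1', hHW, Hdef]
    ring
  -- the xiK branches
  set c0 : ℝ := (1/4) * exp (-(3*t)) *
      (-1 + 6 * exp t - 2 * exp (3*t) - exp (2*t) * (3 - 6*t)) with hc0
  set xi1 : ℝ → ℝ := fun s => (1/4) * exp (-s - 3*t) *
      (-exp s - 2 * exp (4*s) + 6 * exp (2*t) + 3 * exp (s+t) + 3 * exp (3*s+t)
        - exp (s + 2*t) * (9 - 6*s)) with hxi1
  have hxiK_lt : ∀ x : ℝ, x < t → xiK x t = xi1 x := by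
    intro x hx
    rw [hxi1]
    simp only [xiK, if_pos hx, if_neg (not_le.mpr hx), add_zero]
  have hxiK_ge : ∀ x : ℝ, t ≤ x → xiK x t = c0 := by
    intro x hx
    rw [hc0]
    simp only [xiK, if_neg (not_lt.mpr hx), if_pos hx, zero_add]
  have hxi1C : Continuous xi1 := by rw [hxi1]; fun_prop
  -- integrability over the pieces
  have hIoc_h : IntegrableOn h (Ioc 0 t) := hint.mono_set Ioc_subset_Ioi_self
  have hIoi_h : IntegrableOn h (Ioi t) := hint.mono_set (Ioi_subset_Ioi ht.le)
  have hsplit_h : (∫ x in Ioc (0:ℝ) t, h x) + ∫ x in Ioi t, h x = 0 := by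
    rw [← setIntegral_union (Ioc_disjoint_Ioi le_rfl) measurableSet_Ioi hIoc_h hIoi_h,
      Ioc_union_Ioi_eq_Ioi ht.le]
    exact hzero
  have haet : ∀ᵐ (x : ℝ) ∂(volume : Measure ℝ), x ≠ t := by
    rw [ae_iff]
    simpa using measure_singleton (α := ℝ) t
  have hae1 : (fun x => h x * xi1 x)
      =ᵐ[(volume : Measure ℝ).restrict (Ioc 0 t)] (fun x => h x * xiK x t) := by
    filter_upwards [ae_restrict_mem measurableSet_Ioc,
      Filter.Eventually.filter_mono (MeasureTheory.ae_mono Measure.restrict_le_self) haet]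
      with x hx hxt
    rw [hxiK_lt x (lt_of_le_of_ne hx.2 hxt)]
  have hfint1 : IntegrableOn (fun x => h x * xiK x t) (Ioc 0 t) := by
    have base : IntegrableOn (fun x => h x * xi1 x) (Ioc 0 t) :=
      ((hhC.mul hxi1C.continuousOn).integrableOn_compact isCompact_Icc).mono_set
        Ioc_subset_Icc_self
    exact base.congr hae1
  have hfint2 : IntegrableOn (fun x => h x * xiK x t) (Ioi t) := by
    have base : IntegrableOn (fun x => h x * c0) (Ioi t) := hIoi_h.mul_const c0
    refine MeasureTheory.IntegrableOn.congr_fun base ?_ measurableSet_Ioi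
    intro x hx
    show h x * c0 = h x * xiK x t
    rw [hxiK_ge x (le_of_lt hx)]
  have hsplitI : ∫ x in Ioi (0:ℝ), h x * xiK x t
      = (∫ x in Ioc (0:ℝ) t, h x * xiK x t) + ∫ x in Ioi t, h x * xiK x t := by
    rw [← Ioc_union_Ioi_eq_Ioi ht.le,
      setIntegral_union (Ioc_disjoint_Ioi le_rfl) measurableSet_Ioi hfint1 hfint2]
  have e_t : ∫ x in Ioi t, h x * xiK x t = (∫ x in Ioi t, h x) * c0 := by
    rw [← integral_mul_const]
    apply setIntegral_congr_fun measurableSet_Ioi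
    intro x hx
    show h x * xiK x t = h x * c0
    rw [hxiK_ge x (le_of_lt hx)]
  have e_m : ∫ x in Ioc (0:ℝ) t, h x * xiK x t = ∫ s in (0:ℝ)..t, h s * xi1 s := by
    rw [intervalIntegral.integral_of_le ht.le]
    apply setIntegral_congr_ae measurableSet_Ioc
    filter_upwards [haet] with x hxt hx
    rw [hxiK_lt x (lt_of_le_of_ne hx.2 hxt)]
  have e_h : (∫ x in Ioc (0:ℝ) t, h x) = ∫ s in (0:ℝ)..t, h s :=
    (intervalIntegral.integral_of_le ht.le).symm
  have htail : (∫ x in Ioi t, h x) = -(∫ s in (0:ℝ)..t, h s) := by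
    rw [← e_h]
    exact eq_neg_of_add_eq_zero_right hsplit_h
  have ixi : IntervalIntegrable (fun s => h s * xi1 s) volume 0 t :=
    hII _ (hhC.mul hxi1C.continuousOn) t ⟨ht.le, le_rfl⟩
  -- put everything together
  have hval : 3*(1 - exp (-t))^2 * H t - 6*(JH0 + JE1)
      = 4 * ∫ x in Ioi (0:ℝ), h x * xiK x t := by
    rw [hLHS, hsplitI, e_t, e_m, htail]
    have hpt : EqOn (fun s => h s *
        (3*(1-exp (-t))^2 - 6*(1/6 - exp (-(2*(t-s)))/2 + exp (-(3*(t-s)))/3)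
          - 6*exp (-t)*(t+exp (-t)-1) + 6*exp (-t)*(s+exp (-s)-1)))
        (fun s => 4*(h s * xi1 s) - (4*c0) * h s) (uIcc 0 t) := by
      intro s _
      simp only [hxi1, hc0]
      linear_combination h s * kernel_id s t
    rw [intervalIntegral.integral_congr hpt,
        intervalIntegral.integral_sub (ixi.const_mul 4) (ih.const_mul (4*c0)),
        intervalIntegral.integral_const_mul, intervalIntegral.integral_const_mul]
    ring
  rw [← hval]
  exact hpoly
end

section
/- Let h(x) = e^{−x}·(1 + log x − x·log x) for x > 0 (the θ-derivative at θ = 0 of the Weibull density (1+θ)x^θ e^{−x^{1+θ}}). Then ∫₀^∞ h(x)²·e^{x} dx − (∫₀^∞ x·h(x) dx)² = π²/6. (Indeed ∫₀^∞ h(x)²e^{x} dx = π²/6 + (γ−1)² and ∫₀^∞ x·h(x) dx = γ − 1, where γ is the Euler–Mascheroni constant.) -/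
open Real MeasureTheory Set

open Filter Asymptotics Topology


noncomputable def glog (j : ℕ) (x : ℝ) : ℂ := ((Real.log x) ^ j * Real.exp (-x) : ℝ)

lemma glog_succ (j : ℕ) (t : ℝ) : Real.log t • glog j t = glog (j + 1) t := by
  simp only [glog, Complex.real_smul, ← Complex.ofReal_mul, pow_succ]
  ring_nf

lemma glog_locInt (j : ℕ) : LocallyIntegrableOn (glog j) (Ioi 0) := by
  refine (ContinuousOn.locallyIntegrableOn ?_ measurableSet_Ioi)
  refine Complex.continuous_ofReal.comp_continuousOn ?_
  exact ((Real.continuousOn_log.mono (by simp [subset_compl_singleton_iff])).pow j).mul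
    ((Real.continuous_exp.comp continuous_neg).continuousOn)

lemma glog_top (j : ℕ) (a : ℝ) : glog j =O[atTop] (· ^ (-a)) := by
  induction j generalizing a with
  | zero =>
    have hnorm : ∀ x : ℝ, ‖glog 0 x‖ = Real.exp (-1 * x) := fun x => by
      rw [glog, Complex.norm_real, pow_zero, one_mul, Real.norm_eq_abs,
        abs_of_pos (Real.exp_pos _), neg_one_mul]
    refine IsBigO.trans ?_ (isLittleO_exp_neg_mul_rpow_atTop zero_lt_one (-a)).isBigO
    refine isBigO_of_le atTop fun x => ?_
    rw [hnorm, Real.norm_eq_abs, abs_of_pos (Real.exp_pos _)]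
  | succ n ih =>
    have := isBigO_rpow_top_log_smul (b := a) (a := a + 1) (lt_add_one a) (ih (a + 1))
    exact this.congr_left fun t => glog_succ n t

lemma glog_bot (j : ℕ) : ∀ b : ℝ, 0 < b → glog j =O[𝓝[>] (0:ℝ)] (· ^ (-b)) := by
  induction j with
  | zero =>
    intro b hb
    refine IsBigO.of_bound 1 ?_
    filter_upwards [Ioo_mem_nhdsGT_of_mem (by norm_num : (0:ℝ) ∈ Ico (0:ℝ) 1)] with x hx
    have h1 : Real.exp (-x) ≤ 1 := Real.exp_le_one_iff.mpr (by linarith [hx.1])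
    have h2 : (1:ℝ) ≤ x ^ (-b) :=
      Real.one_le_rpow_of_pos_of_le_one_of_nonpos hx.1 hx.2.le (by linarith)
    have h3 : ‖glog 0 x‖ = Real.exp (-x) := by
      rw [glog, Complex.norm_real, pow_zero, one_mul, Real.norm_eq_abs,
        abs_of_pos (Real.exp_pos _)]
    rw [h3, Real.norm_eq_abs, abs_of_pos (Real.rpow_pos_of_pos hx.1 _), one_mul]
    linarith
  | succ n ih =>
    intro b hb
    have := isBigO_rpow_zero_log_smul (a := b/2) (b := b) (by linarith) (ih (b/2) (by linarith))
    exact this.congr_left fun t => glog_succ n t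

lemma mellin_glog_hasDerivAt (j : ℕ) {s : ℂ} (hs : 0 < s.re) :
    HasDerivAt (mellin (glog j)) (mellin (glog (j + 1)) s) s := by
  have h := mellin_hasDerivAt_of_isBigO_rpow (a := s.re + 1) (b := s.re / 2)
    (glog_locInt j) (glog_top j _) (lt_add_one _) (glog_bot j _ (by linarith))
    (by linarith)
  have h2 := h.2
  have : mellin (fun t => Real.log t • glog j t) s = mellin (glog (j+1)) s := by
    unfold mellin; congr 1; ext t; congr 1; exact glog_succ j t
  rwa [this] at h2

lemma mellin_glog_convergent (j : ℕ) {s : ℂ} (hs : 0 < s.re) :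
    MellinConvergent (glog j) s :=
  mellinConvergent_of_isBigO_rpow (glog_locInt j) (glog_top j (s.re + 1)) (lt_add_one _)
    (glog_bot j (s.re / 2) (by linarith)) (by linarith)

noncomputable def Dg (j : ℕ) (s : ℝ) : ℝ := (mellin (glog j) s).re

lemma Dg_hasDerivAt (j : ℕ) {s : ℝ} (hs : 0 < s) :
    HasDerivAt (Dg j) (Dg (j + 1) s) s :=
  HasDerivAt.real_of_complex (mellin_glog_hasDerivAt j (by simpa using hs))

lemma mellin_glog_zero_eq_Gamma {z : ℂ} (hz : 0 < z.re) :
    mellin (glog 0) z = Complex.Gamma z := by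
  rw [Complex.Gamma_eq_integral hz, Complex.GammaIntegral_eq_mellin]
  congr 1; ext x; simp [glog]

lemma Gamma_eventuallyEq {z : ℂ} (hz : 0 < z.re) :
    Complex.Gamma =ᶠ[𝓝 z] mellin (glog 0) := by
  refine eventuallyEq_of_mem ((isOpen_lt continuous_const Complex.continuous_re).mem_nhds hz)
    fun w hw => (mellin_glog_zero_eq_Gamma hw).symm

lemma Gamma_hasDerivAt_Dg {s : ℝ} (hs : 0 < s) :
    HasDerivAt Real.Gamma (Dg 1 s) s := by
  have hsc : (0:ℝ) < (s : ℂ).re := by simpa using hs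
  have hc : HasDerivAt Complex.Gamma (mellin (glog 1) s) (s : ℂ) :=
    (mellin_glog_hasDerivAt 0 hsc).congr_of_eventuallyEq (Gamma_eventuallyEq hsc)
  exact hc.real_of_complex

lemma Dg_zero_eq_Gamma {s : ℝ} (hs : 0 < s) : Dg 0 s = Real.Gamma s := by
  rw [Dg, mellin_glog_zero_eq_Gamma (by simpa using hs)]; rfl

local notation "γ" => Real.eulerMascheroniConstant

lemma Dg1_one : Dg 1 1 = -γ :=
  (Gamma_hasDerivAt_Dg one_pos).unique Real.hasDerivAt_Gamma_one

lemma Dg1_two : Dg 1 2 = 1 - γ := by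
  have h := Real.hasDerivAt_Gamma_nat 1
  norm_num [harmonic_succ, harmonic_zero] at h
  have := (Gamma_hasDerivAt_Dg (by norm_num : (0:ℝ) < 2)).unique h
  linarith

lemma Dg1_three : Dg 1 3 = 3 - 2 * γ := by
  have h := Real.hasDerivAt_Gamma_nat 2
  norm_num [harmonic_succ, harmonic_zero] at h
  have := (Gamma_hasDerivAt_Dg (by norm_num : (0:ℝ) < 3)).unique h
  linarith

noncomputable def psiR (s : ℝ) : ℝ := Dg 1 s / Real.Gamma s
noncomputable def psiR' (s : ℝ) : ℝ :=
  (Dg 2 s * Real.Gamma s - Dg 1 s * Dg 1 s) / Real.Gamma s ^ 2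

lemma logGamma_hasDerivAt {s : ℝ} (hs : 0 < s) :
    HasDerivAt (fun t => Real.log (Real.Gamma t)) (psiR s) s :=
  (Gamma_hasDerivAt_Dg hs).log (Real.Gamma_pos_of_pos hs).ne'

lemma psiR_hasDerivAt {s : ℝ} (hs : 0 < s) : HasDerivAt psiR (psiR' s) s :=
  (Dg_hasDerivAt 1 hs).div (Gamma_hasDerivAt_Dg hs) (Real.Gamma_pos_of_pos hs).ne'

lemma psiR'_half : psiR' (1/2) = π ^ 2 / 2 := by
  set u : ℝ → ℝ := fun s => Real.log (Real.Gamma s) + Real.log (Real.Gamma (1 - s)) with hu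
  set v : ℝ → ℝ := fun s => Real.log π - Real.log (Real.sin (π * s)) with hv
  have hsin : ∀ s : ℝ, s ∈ Ioo (0:ℝ) 1 → 0 < Real.sin (π * s) := by
    intro s hs
    refine Real.sin_pos_of_pos_of_lt_pi (mul_pos Real.pi_pos hs.1) ?_
    calc π * s < π * 1 := by have := Real.pi_pos; nlinarith [hs.2]
    _ = π := mul_one π
  have huv : EqOn u v (Ioo 0 1) := by
    intro s hs
    have h1 : 0 < Real.Gamma s := Real.Gamma_pos_of_pos hs.1
    have h2 : 0 < Real.Gamma (1 - s) := Real.Gamma_pos_of_pos (by linarith [hs.2])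
    have h3 := hsin s hs
    calc u s = Real.log (Real.Gamma s * Real.Gamma (1-s)) := (Real.log_mul h1.ne' h2.ne').symm
    _ = Real.log (π / Real.sin (π * s)) := by rw [Real.Gamma_mul_Gamma_one_sub]
    _ = v s := by rw [Real.log_div Real.pi_ne_zero h3.ne']
  set u' : ℝ → ℝ := fun s => psiR s - psiR (1 - s) with hu'
  set v' : ℝ → ℝ := fun s => -(π * Real.cos (π * s) / Real.sin (π * s)) with hv'
  have hud : ∀ s ∈ Ioo (0:ℝ) 1, HasDerivAt u (u' s) s := by
    intro s hs
    have A := logGamma_hasDerivAt hs.1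
    have B := (logGamma_hasDerivAt (by linarith [hs.2] : (0:ℝ) < 1 - s)).comp s
      ((hasDerivAt_id s).const_sub 1)
    refine (A.add B).congr_deriv ?_
    simp [hu']; ring
  have hvd : ∀ s ∈ Ioo (0:ℝ) 1, HasDerivAt v (v' s) s := by
    intro s hs
    have h3 := hsin s hs
    have hpi : HasDerivAt (fun t : ℝ => π * t) π s := by
      simpa using (hasDerivAt_id s).const_mul π
    have hs1 : HasDerivAt (fun t : ℝ => Real.sin (π * t)) (Real.cos (π * s) * π) s := hpi.sin
    have := (hs1.log h3.ne').const_sub (Real.log π)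
    refine this.congr_deriv ?_
    simp [hv']; ring
  have heq' : EqOn u' v' (Ioo 0 1) := by
    intro s hs
    have hev : u =ᶠ[𝓝 s] v := eventuallyEq_of_mem (isOpen_Ioo.mem_nhds hs) huv
    exact (hud s hs).unique ((hvd s hs).congr_of_eventuallyEq hev)
  have hmem : (1/2 : ℝ) ∈ Ioo (0:ℝ) 1 := by norm_num
  have hu2 : HasDerivAt u' (psiR' (1/2) + psiR' (1/2)) (1/2) := by
    have A := psiR_hasDerivAt (by norm_num : (0:ℝ) < 1/2)
    have B := (psiR_hasDerivAt (by norm_num : (0:ℝ) < 1 - 1/2)).comp ((1:ℝ)/2)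
      ((hasDerivAt_id ((1:ℝ)/2)).const_sub 1)
    have C := A.sub B
    refine C.congr_deriv ?_
    norm_num
  have hv2 : HasDerivAt v' (π ^ 2) (1/2) := by
    have hpi : HasDerivAt (fun t : ℝ => π * t) π ((1:ℝ)/2) := by
      simpa using (hasDerivAt_id ((1:ℝ)/2)).const_mul π
    have hcos : HasDerivAt (fun t : ℝ => π * Real.cos (π * t))
        (π * (-Real.sin (π * (1/2)) * π)) (1/2) := hpi.cos.const_mul π
    have hsin2 : HasDerivAt (fun t : ℝ => Real.sin (π * t))
        (Real.cos (π * (1/2)) * π) (1/2) := hpi.sin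
    have hne : Real.sin (π * (1/2)) ≠ 0 := (hsin _ hmem).ne'
    have := (hcos.div hsin2 hne).neg
    refine this.congr_deriv ?_
    rw [show π * (1/2 : ℝ) = π / 2 by ring, Real.sin_pi_div_two, Real.cos_pi_div_two]
    ring
  have hev' : u' =ᶠ[𝓝 (1/2 : ℝ)] v' := eventuallyEq_of_mem (isOpen_Ioo.mem_nhds hmem) heq'
  have := hu2.unique (hv2.congr_of_eventuallyEq hev')
  linarith

lemma psiR'_one : psiR' 1 = π ^ 2 / 6 := by
  set w : ℝ → ℝ := fun s => Real.log (Real.Gamma s) + Real.log (Real.Gamma (s + 1/2)) with hwdef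
  set z : ℝ → ℝ := fun s =>
    Real.log (Real.Gamma (2*s)) + (1 - 2*s) * Real.log 2 + Real.log (Real.sqrt π) with hzdef
  have hwz : EqOn w z (Ioi 0) := by
    intro s hs
    rw [mem_Ioi] at hs
    have h1 : 0 < Real.Gamma s := Real.Gamma_pos_of_pos hs
    have h2 : 0 < Real.Gamma (s + 1/2) := Real.Gamma_pos_of_pos (by linarith)
    have h3 : 0 < Real.Gamma (2*s) := Real.Gamma_pos_of_pos (by linarith)
    have h4 : (0:ℝ) < Real.sqrt π := Real.sqrt_pos.mpr Real.pi_pos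
    have h5 : (0:ℝ) < (2:ℝ) ^ (1 - 2*s) := Real.rpow_pos_of_pos two_pos _
    calc w s = Real.log (Real.Gamma s * Real.Gamma (s + 1/2)) :=
          (Real.log_mul h1.ne' h2.ne').symm
    _ = Real.log (Real.Gamma (2*s) * (2:ℝ) ^ (1 - 2*s) * Real.sqrt π) := by
          rw [Real.Gamma_mul_Gamma_add_half]
    _ = z s := by
          rw [Real.log_mul (by positivity) h4.ne', Real.log_mul h3.ne' h5.ne',
            Real.log_rpow two_pos]
  set w' : ℝ → ℝ := fun s => psiR s + psiR (s + 1/2) with hw'def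
  set z' : ℝ → ℝ := fun s => 2 * psiR (2*s) - 2 * Real.log 2 with hz'def
  have hwd : ∀ s ∈ Ioi (0:ℝ), HasDerivAt w (w' s) s := by
    intro s hs
    rw [mem_Ioi] at hs
    have A := logGamma_hasDerivAt hs
    have B := (logGamma_hasDerivAt (by linarith : (0:ℝ) < s + 1/2)).comp s
      ((hasDerivAt_id s).add_const (1/2))
    refine (A.add B).congr_deriv ?_
    rw [hw'def]; norm_num
  have hzd : ∀ s ∈ Ioi (0:ℝ), HasDerivAt z (z' s) s := by
    intro s hs
    rw [mem_Ioi] at hs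
    have h2s : HasDerivAt (fun t : ℝ => 2 * t) 2 s := by
      simpa using (hasDerivAt_id s).const_mul 2
    have A := (logGamma_hasDerivAt (by linarith : (0:ℝ) < 2*s)).comp s h2s
    have B : HasDerivAt (fun t : ℝ => (1 - 2*t) * Real.log 2) (-2 * Real.log 2) s := by
      simpa using (h2s.const_sub 1).mul_const (Real.log 2)
    have C := (A.add B).add_const (Real.log (Real.sqrt π))
    refine C.congr_deriv ?_
    simp [hz'def]; ring
  have heq' : EqOn w' z' (Ioi 0) := by
    intro s hs
    have hev : w =ᶠ[𝓝 s] z := eventuallyEq_of_mem (isOpen_Ioi.mem_nhds hs) hwz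
    exact (hwd s hs).unique ((hzd s hs).congr_of_eventuallyEq hev)
  have hmem : (1/2 : ℝ) ∈ Ioi (0:ℝ) := by norm_num
  have hw2 : HasDerivAt w' (psiR' (1/2) + psiR' 1) (1/2) := by
    have A := psiR_hasDerivAt (by norm_num : (0:ℝ) < 1/2)
    have B : HasDerivAt (fun t : ℝ => psiR (t + 1/2)) (psiR' (1/2 + 1/2)) ((1:ℝ)/2) :=
      HasDerivAt.comp_add_const _ _ (psiR_hasDerivAt (by norm_num : (0:ℝ) < 1/2 + 1/2))
    have C := A.add B
    refine C.congr_deriv ?_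
    norm_num
  have hz2 : HasDerivAt z' (4 * psiR' 1) (1/2) := by
    have h2s : HasDerivAt (fun t : ℝ => 2 * t) 2 ((1:ℝ)/2) := by
      simpa using (hasDerivAt_id ((1:ℝ)/2)).const_mul 2
    have A := ((psiR_hasDerivAt (by norm_num : (0:ℝ) < 2 * (1/2))).comp ((1:ℝ)/2)
      h2s).const_mul 2
    have C := A.sub_const (2 * Real.log 2)
    refine C.congr_deriv ?_
    norm_num; ring
  have hev' : w' =ᶠ[𝓝 (1/2 : ℝ)] z' := eventuallyEq_of_mem (isOpen_Ioi.mem_nhds hmem) heq'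
  have := hw2.unique (hz2.congr_of_eventuallyEq hev')
  have hhalf := psiR'_half
  linarith

lemma Dg2_one : Dg 2 1 = π ^ 2 / 6 + γ ^ 2 := by
  have h := psiR'_one
  rw [psiR', Real.Gamma_one, Dg1_one] at h
  norm_num at h
  linarith

lemma Dg2_rec {s : ℝ} (hs : 0 < s) : Dg 2 (s + 1) = 2 * Dg 1 s + s * Dg 2 s := by
  have hrec : EqOn (fun t => Dg 1 (t + 1)) (fun t => Real.Gamma t + t * Dg 1 t) (Ioi 0) := by
    intro t ht
    rw [mem_Ioi] at ht
    have A : HasDerivAt (fun r : ℝ => Real.Gamma (r + 1)) (Dg 1 (t + 1)) t :=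
      HasDerivAt.comp_add_const _ _ (Gamma_hasDerivAt_Dg (by linarith))
    have B : HasDerivAt (fun r : ℝ => r * Real.Gamma r) (1 * Real.Gamma t + t * Dg 1 t) t :=
      (hasDerivAt_id t).mul (Gamma_hasDerivAt_Dg ht)
    have hev : (fun r : ℝ => Real.Gamma (r + 1)) =ᶠ[𝓝 t] fun r => r * Real.Gamma r := by
      filter_upwards [eventually_gt_nhds ht] with r hr
      rw [Real.Gamma_add_one hr.ne']
    have := A.unique (B.congr_of_eventuallyEq hev)
    simpa using this
  have A : HasDerivAt (fun t : ℝ => Dg 1 (t + 1)) (Dg 2 (s + 1)) s :=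
    HasDerivAt.comp_add_const _ _ (Dg_hasDerivAt 1 (by linarith))
  have B : HasDerivAt (fun t : ℝ => Real.Gamma t + t * Dg 1 t)
      (Dg 1 s + (1 * Dg 1 s + s * Dg 2 s)) s :=
    (Gamma_hasDerivAt_Dg hs).add ((hasDerivAt_id s).mul (Dg_hasDerivAt 1 hs))
  have hev : (fun t : ℝ => Dg 1 (t + 1)) =ᶠ[𝓝 s] fun t => Real.Gamma t + t * Dg 1 t :=
    eventuallyEq_of_mem (isOpen_Ioi.mem_nhds hs) hrec
  have := A.unique (B.congr_of_eventuallyEq hev)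
  linarith

lemma Dg2_two : Dg 2 2 = π ^ 2 / 6 + γ ^ 2 - 2 * γ := by
  have h := Dg2_rec one_pos
  norm_num [Dg1_one, Dg2_one] at h
  linarith

lemma Dg2_three : Dg 2 3 = 2 - 6 * γ + 2 * γ ^ 2 + π ^ 2 / 3 := by
  have h := Dg2_rec (by norm_num : (0:ℝ) < 2)
  norm_num [Dg1_two, Dg2_two] at h
  linarith

lemma glog_smul_eq (j k : ℕ) (x : ℝ) :
    ((x:ℂ) ^ ((((k:ℝ) + 1 : ℝ) : ℂ) - 1)) • glog j x
      = ((x ^ k * ((Real.log x)^j * Real.exp (-x)) : ℝ) : ℂ) := by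
  have h : ((((k:ℝ) + 1 : ℝ)) : ℂ) - 1 = ((k : ℕ) : ℂ) := by push_cast; ring
  rw [h, Complex.cpow_natCast, glog, smul_eq_mul]
  push_cast
  ring

lemma integral_eq_Dg (j k : ℕ) :
    ∫ x in Ioi (0:ℝ), x ^ k * ((Real.log x)^j * Real.exp (-x)) = Dg j ((k:ℝ) + 1) := by
  have : mellin (glog j) ((((k:ℝ) + 1 : ℝ)) : ℂ)
      = ((∫ x in Ioi (0:ℝ), x ^ k * ((Real.log x)^j * Real.exp (-x)) : ℝ) : ℂ) := by
    rw [mellin]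
    calc (∫ t in Ioi (0:ℝ), ((t:ℂ) ^ ((((k:ℝ) + 1 : ℝ) : ℂ) - 1)) • glog j t)
        = ∫ x in Ioi (0:ℝ), ((x ^ k * ((Real.log x)^j * Real.exp (-x)) : ℝ) : ℂ) :=
          setIntegral_congr_fun measurableSet_Ioi fun x _ => glog_smul_eq j k x
    _ = ((∫ x in Ioi (0:ℝ), x ^ k * ((Real.log x)^j * Real.exp (-x)) : ℝ) : ℂ) :=
          integral_ofReal
  rw [Dg, this, Complex.ofReal_re]

lemma integrable_fn (j k : ℕ) :
    IntegrableOn (fun x => x ^ k * ((Real.log x)^j * Real.exp (-x))) (Ioi (0:ℝ)) := by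
  have h := mellin_glog_convergent j (s := ((((k:ℝ) + 1 : ℝ)) : ℂ))
    (by simp; positivity)
  have h2 : IntegrableOn
      (fun x : ℝ => ((x ^ k * ((Real.log x)^j * Real.exp (-x)) : ℝ) : ℂ)) (Ioi 0) :=
    h.congr_fun (fun x _ => glog_smul_eq j k x) measurableSet_Ioi
  exact h2.re.congr (Filter.Eventually.of_forall fun x => Complex.ofReal_re _)

lemma Dg0_one : Dg 0 1 = 1 := by
  rw [Dg_zero_eq_Gamma one_pos, Real.Gamma_one]

lemma Dg0_two : Dg 0 2 = 1 := by
  rw [Dg_zero_eq_Gamma (by norm_num : (0:ℝ) < 2), Real.Gamma_two]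

/-- The θ-derivative at `θ = 0` of the Weibull density `(1+θ)x^θ e^{−x^{1+θ}}`. -/
noncomputable def hWeibull (x : ℝ) : ℝ := exp (-x) * (1 + log x - x * log x)

/-- `∫₀^∞ h(x)²·e^x dx − (∫₀^∞ x·h(x) dx)² = π²/6`; indeed
`∫₀^∞ h(x)²e^x dx = π²/6 + (γ−1)²` and `∫₀^∞ x·h(x) dx = γ − 1`. -/
theorem stmt_11 :
    (∫ x in Ioi (0:ℝ), (hWeibull x)^2 * exp x) -
      (∫ x in Ioi (0:ℝ), x * hWeibull x)^2 = π^2/6 ∧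
    (∫ x in Ioi (0:ℝ), (hWeibull x)^2 * exp x) =
      π^2/6 + (Real.eulerMascheroniConstant - 1)^2 ∧
    (∫ x in Ioi (0:ℝ), x * hWeibull x) = Real.eulerMascheroniConstant - 1 := by
  have i00 := integrable_fn 0 0
  have i01 := integrable_fn 0 1
  have i10 := integrable_fn 1 0
  have i11 := integrable_fn 1 1
  have i12 := integrable_fn 1 2
  have i20 := integrable_fn 2 0
  have i21 := integrable_fn 2 1
  have i22 := integrable_fn 2 2
  have hJ : (∫ x in Ioi (0:ℝ), x * hWeibull x) = γ - 1 := by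
    have hfun : (fun x : ℝ => x * hWeibull x) = fun x =>
        x ^ 1 * ((Real.log x)^0 * Real.exp (-x)) + x ^ 1 * ((Real.log x)^1 * Real.exp (-x))
          - x ^ 2 * ((Real.log x)^1 * Real.exp (-x)) := by
      funext x; simp only [hWeibull]; ring
    have hA : IntegrableOn (fun x : ℝ => x ^ 1 * ((Real.log x)^0 * Real.exp (-x))
        + x ^ 1 * ((Real.log x)^1 * Real.exp (-x))) (Ioi 0) := i01.add i11
    rw [hfun, integral_sub hA i12, integral_add i01 i11,
      integral_eq_Dg, integral_eq_Dg, integral_eq_Dg]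
    norm_num [Dg0_two, Dg1_two, Dg1_three]
    ring
  have hI : (∫ x in Ioi (0:ℝ), (hWeibull x)^2 * Real.exp x) = π^2/6 + (γ - 1)^2 := by
    have hfun : (fun x : ℝ => (hWeibull x)^2 * Real.exp x) = fun x =>
        x ^ 0 * ((Real.log x)^0 * Real.exp (-x))
          + 2 * (x ^ 0 * ((Real.log x)^1 * Real.exp (-x)))
          - 2 * (x ^ 1 * ((Real.log x)^1 * Real.exp (-x)))
          + x ^ 0 * ((Real.log x)^2 * Real.exp (-x))
          - 2 * (x ^ 1 * ((Real.log x)^2 * Real.exp (-x)))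
          + x ^ 2 * ((Real.log x)^2 * Real.exp (-x)) := by
      funext x
      simp only [hWeibull]
      rw [Real.exp_neg]
      have h := Real.exp_ne_zero x
      field_simp
      ring
    have hB1 : IntegrableOn (fun x : ℝ => x ^ 0 * ((Real.log x)^0 * Real.exp (-x))
        + 2 * (x ^ 0 * ((Real.log x)^1 * Real.exp (-x)))) (Ioi 0) :=
      i00.add (i10.const_mul 2)
    have hB2 : IntegrableOn (fun x : ℝ => x ^ 0 * ((Real.log x)^0 * Real.exp (-x))
        + 2 * (x ^ 0 * ((Real.log x)^1 * Real.exp (-x)))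
        - 2 * (x ^ 1 * ((Real.log x)^1 * Real.exp (-x)))) (Ioi 0) :=
      hB1.sub (i11.const_mul 2)
    have hB3 : IntegrableOn (fun x : ℝ => x ^ 0 * ((Real.log x)^0 * Real.exp (-x))
        + 2 * (x ^ 0 * ((Real.log x)^1 * Real.exp (-x)))
        - 2 * (x ^ 1 * ((Real.log x)^1 * Real.exp (-x)))
        + x ^ 0 * ((Real.log x)^2 * Real.exp (-x))) (Ioi 0) :=
      hB2.add i20
    have hB4 : IntegrableOn (fun x : ℝ => x ^ 0 * ((Real.log x)^0 * Real.exp (-x))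
        + 2 * (x ^ 0 * ((Real.log x)^1 * Real.exp (-x)))
        - 2 * (x ^ 1 * ((Real.log x)^1 * Real.exp (-x)))
        + x ^ 0 * ((Real.log x)^2 * Real.exp (-x))
        - 2 * (x ^ 1 * ((Real.log x)^2 * Real.exp (-x)))) (Ioi 0) :=
      hB3.sub (i21.const_mul 2)
    rw [hfun, integral_add hB4 i22, integral_sub hB3 (i21.const_mul 2),
      integral_add hB2 i20, integral_sub hB1 (i11.const_mul 2),
      integral_add i00 (i10.const_mul 2),
      integral_const_mul, integral_const_mul, integral_const_mul,
      integral_eq_Dg, integral_eq_Dg, integral_eq_Dg, integral_eq_Dg, integral_eq_Dg,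
      integral_eq_Dg]
    norm_num [Dg0_one, Dg1_one, Dg1_two, Dg2_one, Dg2_two, Dg2_three]
    ring
  refine ⟨?_, hI, hJ⟩
  rw [hI, hJ]; ring
end

section
/- For every θ > 0, with g(x,θ) = (1 + θx)e^{−x}/(1 + θ) the extended exponential density and G(y,θ) = ∫₀^y g(u,θ) du = 1 − e^{−y}(1 + θ + θy)/(1 + θ) its distribution function, one has 1/4 − 6·∫₀^∞ g(x,θ)·(∫₀^∞ G(y,θ)·(1 − G(y,θ))·g(y,θ)·(∫_{x+y}^∞ g(z,θ) dz) dy) dx = θ²·(168 + 356θ + 161θ²)/(2304·(1 + θ)⁴). -/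
open Real MeasureTheory Set Filter Topology

/-- The extended exponential (EE) density `g(x,θ) = (1 + θx)e^{−x}/(1 + θ)`. -/
noncomputable def gEE (θ x : ℝ) : ℝ := (1 + θ * x) * exp (-x) / (1 + θ)

/-- The EE distribution function `G(y,θ) = 1 − e^{−y}(1 + θ + θy)/(1 + θ)`. -/
noncomputable def GEE (θ y : ℝ) : ℝ := 1 - exp (-y) * (1 + θ + θ * y) / (1 + θ)

lemma integrableOn_pow_exp (n : ℕ) {r : ℝ} (hr : 0 < r) (a : ℝ) :
    IntegrableOn (fun t : ℝ => t ^ n * exp (-(r * t))) (Ioi a) := by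
  apply integrable_of_isBigO_exp_neg (half_pos hr)
  · exact ((continuous_pow n).mul
      (Real.continuous_exp.comp (continuous_const.mul continuous_id').neg)).continuousOn
  · have h1 : Tendsto (fun x : ℝ => x ^ n * exp (-(r/2) * x)) atTop (𝓝 0) := by
      refine (tendsto_rpow_mul_exp_neg_mul_atTop_nhds_zero (n : ℝ) (r/2) (half_pos hr)).congr' ?_
      filter_upwards [eventually_gt_atTop (0:ℝ)] with x hx
      rw [Real.rpow_natCast]
    have h2 := (h1.isBigO_one ℝ).mul
      (Asymptotics.isBigO_refl (fun x : ℝ => exp (-(r/2) * x)) atTop)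
    refine h2.congr (fun x => ?_) (fun x => one_mul _)
    rw [mul_assoc, ← Real.exp_add, show (-(r/2) * x + -(r/2) * x) = -(r * x) by ring]

lemma intPowExp (n : ℕ) {r : ℝ} (hr : 0 < r) :
    ∫ t in Ioi (0:ℝ), t ^ n * exp (-(r * t)) = n.factorial / r ^ (n + 1) := by
  have h := Real.integral_rpow_mul_exp_neg_mul_Ioi (a := (n:ℝ) + 1) (by positivity) hr
  rw [Real.Gamma_nat_eq_factorial] at h
  rw [show ((n:ℝ) + 1) = ((n + 1 : ℕ) : ℝ) by push_cast; ring, Real.rpow_natCast] at h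
  have h2 : ∫ t in Ioi (0:ℝ), t ^ n * exp (-(r * t))
      = ∫ t in Ioi (0:ℝ), t ^ (((n + 1 : ℕ) : ℝ) - 1) * exp (-(r * t)) := by
    refine setIntegral_congr_fun measurableSet_Ioi (fun t ht => ?_)
    rw [show ((n + 1 : ℕ) : ℝ) - 1 = (n : ℝ) by push_cast; ring, Real.rpow_natCast]
  rw [h2, h, div_pow, one_pow]
  ring

lemma integrableOn_polyExp {r : ℝ} (hr : 0 < r) (c0 c1 c2 c3 c4 : ℝ) :
    IntegrableOn (fun y : ℝ =>
      (c0 + c1 * y + c2 * y^2 + c3 * y^3 + c4 * y^4) * exp (-(r * y))) (Ioi 0) := by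
  have h : ∀ k : ℕ, IntegrableOn (fun y : ℝ => y ^ k * exp (-(r * y))) (Ioi 0) :=
    fun k => integrableOn_pow_exp k hr 0
  have := (((((h 0).const_mul c0).add ((h 1).const_mul c1)).add ((h 2).const_mul c2)).add
    ((h 3).const_mul c3)).add ((h 4).const_mul c4)
  refine IntegrableOn.congr_fun this (fun y _ => ?_) measurableSet_Ioi
  simp only [Pi.add_apply]
  ring

lemma intPolyExp (r : ℝ) (hr : 0 < r) (c0 c1 c2 c3 c4 : ℝ) :
    ∫ y in Ioi (0:ℝ), (c0 + c1 * y + c2 * y^2 + c3 * y^3 + c4 * y^4) * exp (-(r * y))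
      = c0 / r + c1 / r^2 + 2 * c2 / r^3 + 6 * c3 / r^4 + 24 * c4 / r^5 := by
  have h : ∀ k : ℕ, IntegrableOn (fun y : ℝ => y ^ k * exp (-(r * y))) (Ioi 0) :=
    fun k => integrableOn_pow_exp k hr 0
  have key : ∀ y : ℝ, (c0 + c1 * y + c2 * y^2 + c3 * y^3 + c4 * y^4) * exp (-(r * y))
      = c0 * (y ^ 0 * exp (-(r * y))) + (c1 * (y ^ 1 * exp (-(r * y)))
        + (c2 * (y ^ 2 * exp (-(r * y))) + (c3 * (y ^ 3 * exp (-(r * y)))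
        + c4 * (y ^ 4 * exp (-(r * y)))))) := fun y => by ring
  rw [show (∫ y in Ioi (0:ℝ), (c0 + c1 * y + c2 * y^2 + c3 * y^3 + c4 * y^4) * exp (-(r * y)))
      = ∫ y in Ioi (0:ℝ), (c0 * (y ^ 0 * exp (-(r * y))) + (c1 * (y ^ 1 * exp (-(r * y)))
        + (c2 * (y ^ 2 * exp (-(r * y))) + (c3 * (y ^ 3 * exp (-(r * y)))
        + c4 * (y ^ 4 * exp (-(r * y))))))) from by simp only [key]]
  have i4 := (h 4).const_mul c4
  have i3 := (h 3).const_mul c3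
  have i2 := (h 2).const_mul c2
  have i1 := (h 1).const_mul c1
  have i0 := (h 0).const_mul c0
  have i34 : Integrable (fun y : ℝ => c3 * (y ^ 3 * exp (-(r * y)))
      + c4 * (y ^ 4 * exp (-(r * y)))) (volume.restrict (Ioi 0)) := i3.add i4
  have i234 : Integrable (fun y : ℝ => c2 * (y ^ 2 * exp (-(r * y)))
      + (c3 * (y ^ 3 * exp (-(r * y))) + c4 * (y ^ 4 * exp (-(r * y)))))
      (volume.restrict (Ioi 0)) := i2.add i34
  have i1234 : Integrable (fun y : ℝ => c1 * (y ^ 1 * exp (-(r * y)))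
      + (c2 * (y ^ 2 * exp (-(r * y))) + (c3 * (y ^ 3 * exp (-(r * y)))
      + c4 * (y ^ 4 * exp (-(r * y)))))) (volume.restrict (Ioi 0)) := i1.add i234
  rw [integral_add i0 i1234, integral_add i1 i234, integral_add i2 i34, integral_add i3 i4]
  simp only [integral_const_mul]
  rw [intPowExp 0 hr, intPowExp 1 hr, intPowExp 2 hr, intPowExp 3 hr, intPowExp 4 hr]
  have hr' : r ≠ 0 := ne_of_gt hr
  norm_num [Nat.factorial]
  field_simp
  ring

lemma integrableOn_gEE {θ : ℝ} (hθ : 0 < θ) (a : ℝ) :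
    IntegrableOn (fun z => gEE θ z) (Ioi a) := by
  have hne : (1:ℝ) + θ ≠ 0 := by positivity
  have := ((integrableOn_pow_exp 0 one_pos a).const_mul (1/(1+θ))).add
    ((integrableOn_pow_exp 1 one_pos a).const_mul (θ/(1+θ)))
  refine IntegrableOn.congr_fun this (fun z _ => ?_) measurableSet_Ioi
  unfold gEE
  simp only [Pi.add_apply, one_mul, pow_zero, pow_one]
  field_simp

lemma tail_eq {θ : ℝ} (hθ : 0 < θ) (t : ℝ) :
    ∫ z in Ioi t, gEE θ z = exp (-t) * (1 + θ + θ * t) / (1 + θ) := by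
  have hne : (1:ℝ) + θ ≠ 0 := by positivity
  have hderiv : ∀ z ∈ Ici t,
      HasDerivAt (fun z : ℝ => -(exp (-z) * (1 + θ + θ * z) / (1 + θ))) (gEE θ z) z := by
    intro z _
    have h1 : HasDerivAt (fun z : ℝ => exp (-z)) (-exp (-z)) z := by
      simpa using ((hasDerivAt_id z).neg).exp
    have h2 : HasDerivAt (fun z : ℝ => 1 + θ + θ * z) θ z := by
      simpa using ((hasDerivAt_id z).const_mul θ).const_add (1 + θ)
    have := ((h1.mul h2).div_const (1 + θ)).neg
    refine this.congr_deriv ?_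
    unfold gEE
    field_simp
    ring
  have htend : Tendsto (fun z : ℝ => -(exp (-z) * (1 + θ + θ * z) / (1 + θ))) atTop (𝓝 0) := by
    have A : Tendsto (fun z : ℝ => exp (-z)) atTop (𝓝 0) :=
      Real.tendsto_exp_neg_atTop_nhds_zero
    have B : Tendsto (fun z : ℝ => z * exp (-z)) atTop (𝓝 0) := by
      simpa using tendsto_pow_mul_exp_neg_atTop_nhds_zero 1
    have base := (((A.const_mul (1 + θ)).add (B.const_mul θ)).div_const (1 + θ)).neg
    have : -(((1 + θ) * 0 + θ * 0) / (1 + θ)) = 0 := by ring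
    rw [this] at base
    refine Filter.Tendsto.congr (fun z => ?_) base
    ring
  have key := integral_Ioi_of_hasDerivAt_of_tendsto' hderiv (integrableOn_gEE hθ t) htend
  rw [key]
  ring

lemma inner_eq {θ : ℝ} (hθ : 0 < θ) (x : ℝ) :
    ∫ y in Ioi (0:ℝ), GEE θ y * (1 - GEE θ y) * gEE θ y *
        (exp (-(x + y)) * (1 + θ + θ * (x + y)) / (1 + θ))
      = exp (-x) * ((288 + 1152*θ + 1728*θ^2 + 1152*θ^3 + 288*θ^4)
          + (288*θ + 696*θ^2 + 508*θ^3 + 127*θ^4) * x) / (3456 * (1+θ)^4) := by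
  have hne : (1:ℝ) + θ ≠ 0 := by positivity
  have key : ∀ y : ℝ, GEE θ y * (1 - GEE θ y) * gEE θ y *
        (exp (-(x + y)) * (1 + θ + θ * (x + y)) / (1 + θ))
      = ((exp (-x) * (1 + 2*θ + θ*x + θ^2 + θ^2*x) / (1+θ)^3)
          + (exp (-x) * (3*θ + 4*θ^2 + 2*θ^2*x + θ^3 + θ^3*x) / (1+θ)^3) * y
          + (exp (-x) * (3*θ^2 + 2*θ^3 + θ^3*x) / (1+θ)^3) * y^2
          + (exp (-x) * θ^3 / (1+θ)^3) * y^3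
          + 0 * y^4) * exp (-(3 * y))
        + ((-(exp (-x) * (1 + 3*θ + θ*x + 3*θ^2 + 2*θ^2*x + θ^3 + θ^3*x) / (1+θ)^4))
          + (-(exp (-x) * (4*θ + 9*θ^2 + 3*θ^2*x + 6*θ^3 + 4*θ^3*x + θ^4 + θ^4*x) / (1+θ)^4)) * y
          + (-(exp (-x) * (6*θ^2 + 9*θ^3 + 3*θ^3*x + 3*θ^4 + 2*θ^4*x) / (1+θ)^4)) * y^2
          + (-(exp (-x) * (4*θ^3 + 3*θ^4 + θ^4*x) / (1+θ)^4)) * y^3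
          + (-(exp (-x) * θ^4 / (1+θ)^4)) * y^4) * exp (-(4 * y)) := by
    intro y
    unfold GEE gEE
    have hxy : exp (-(x + y)) = exp (-x) * exp (-y) := by
      rw [← Real.exp_add]; ring_nf
    have h3 : exp (-(3 * y)) = exp (-y) ^ 3 := by
      rw [show -(3 * y) = (3:ℕ) * (-y) by push_cast; ring, Real.exp_nat_mul]
    have h4 : exp (-(4 * y)) = exp (-y) ^ 4 := by
      rw [show -(4 * y) = (4:ℕ) * (-y) by push_cast; ring, Real.exp_nat_mul]
    rw [hxy, h3, h4]
    field_simp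
    ring
  rw [show (∫ y in Ioi (0:ℝ), GEE θ y * (1 - GEE θ y) * gEE θ y *
        (exp (-(x + y)) * (1 + θ + θ * (x + y)) / (1 + θ)))
      = ∫ y in Ioi (0:ℝ), (((exp (-x) * (1 + 2*θ + θ*x + θ^2 + θ^2*x) / (1+θ)^3)
          + (exp (-x) * (3*θ + 4*θ^2 + 2*θ^2*x + θ^3 + θ^3*x) / (1+θ)^3) * y
          + (exp (-x) * (3*θ^2 + 2*θ^3 + θ^3*x) / (1+θ)^3) * y^2
          + (exp (-x) * θ^3 / (1+θ)^3) * y^3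
          + 0 * y^4) * exp (-(3 * y))
        + ((-(exp (-x) * (1 + 3*θ + θ*x + 3*θ^2 + 2*θ^2*x + θ^3 + θ^3*x) / (1+θ)^4))
          + (-(exp (-x) * (4*θ + 9*θ^2 + 3*θ^2*x + 6*θ^3 + 4*θ^3*x + θ^4 + θ^4*x) / (1+θ)^4)) * y
          + (-(exp (-x) * (6*θ^2 + 9*θ^3 + 3*θ^3*x + 3*θ^4 + 2*θ^4*x) / (1+θ)^4)) * y^2
          + (-(exp (-x) * (4*θ^3 + 3*θ^4 + θ^4*x) / (1+θ)^4)) * y^3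
          + (-(exp (-x) * θ^4 / (1+θ)^4)) * y^4) * exp (-(4 * y)))
      from by simp only [key]]
  rw [integral_add (integrableOn_polyExp (by norm_num : (0:ℝ) < 3) _ _ _ _ _)
      (integrableOn_polyExp (by norm_num : (0:ℝ) < 4) _ _ _ _ _),
    intPolyExp 3 (by norm_num), intPolyExp 4 (by norm_num)]
  field_simp
  ring

/-- The limit in probability `b(θ)` for the extended exponential alternative. -/
theorem stmt_13 (θ : ℝ) (hθ : 0 < θ) :
    1/4 - 6 * ∫ x in Ioi (0:ℝ), gEE θ x *
        ∫ y in Ioi (0:ℝ), GEE θ y * (1 - GEE θ y) * gEE θ y * (∫ z in Ioi (x + y), gEE θ z) =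
      θ^2 * (168 + 356 * θ + 161 * θ^2) / (2304 * (1 + θ)^4) := by
  have hne : (1:ℝ) + θ ≠ 0 := by positivity
  simp only [tail_eq hθ, inner_eq hθ]
  have key2 : ∀ x : ℝ, gEE θ x * (exp (-x) * ((288 + 1152*θ + 1728*θ^2 + 1152*θ^3 + 288*θ^4)
          + (288*θ + 696*θ^2 + 508*θ^3 + 127*θ^4) * x) / (3456 * (1+θ)^4))
      = (((288 + 1152*θ + 1728*θ^2 + 1152*θ^3 + 288*θ^4) / (3456 * (1+θ)^5))
        + (((288*θ + 696*θ^2 + 508*θ^3 + 127*θ^4)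
            + θ * (288 + 1152*θ + 1728*θ^2 + 1152*θ^3 + 288*θ^4)) / (3456 * (1+θ)^5)) * x
        + ((θ * (288*θ + 696*θ^2 + 508*θ^3 + 127*θ^4)) / (3456 * (1+θ)^5)) * x^2
        + 0 * x^3 + 0 * x^4) * exp (-(2 * x)) := by
    intro x
    unfold gEE
    have h2 : exp (-(2 * x)) = exp (-x) ^ 2 := by
      rw [show -(2 * x) = (2:ℕ) * (-x) by push_cast; ring, Real.exp_nat_mul]
    rw [h2]
    field_simp
    ring
  simp only [key2]
  rw [intPolyExp 2 (by norm_num)]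
  field_simp
  ring
end

section
/- For every θ > 0 and t ≥ 0, with g(x,θ) = (1 + θx)e^{−x}/(1 + θ) the extended exponential density and G(y,θ) = 1 − e^{−y}(1 + θ + θy)/(1 + θ) its distribution function, one has G(t,θ)³ − 6·∫₀^t g(x,θ)·(∫₀^{t−x} G(y,θ)·(1 − G(y,θ))·g(y,θ) dy) dx = (3/(4(1 + θ)⁴))·e^{−3t}·θ²·(−2 − 8θ − 9θ² − 2t³θ² − 4t²θ(1 + 2θ) + 8e^t(1 + θ)(2 + t + 6θ + 4tθ + t²θ) − t(2 + 10θ + 13θ²) + e^{2t}(−14 − 56θ − 39θ² + t(6 + 18θ + 11θ²))). -/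
open Real MeasureTheory Set

lemma hasDerivAt_poly4 (c0 c1 c2 c3 c4 x : ℝ) :
    HasDerivAt (fun y : ℝ => c0 + c1*y + c2*y^2 + c3*y^3 + c4*y^4)
      (c1 + 2*c2*x + 3*c3*x^2 + 4*c4*x^3) x := by
  have h : HasDerivAt (fun y : ℝ => y) 1 x := hasDerivAt_id' (x := x)
  have H := ((((hasDerivAt_const x c0).add (h.const_mul c1)).add
      ((h.pow 2).const_mul c2)).add ((h.pow 3).const_mul c3)).add ((h.pow 4).const_mul c4)
  refine H.congr_deriv ?_
  push_cast
  ring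

lemma hasDerivAt_GEE (θ : ℝ) (hne : (1:ℝ) + θ ≠ 0) (y : ℝ) :
    HasDerivAt (fun z : ℝ => GEE θ z) (gEE θ y) y := by
  have hlin : HasDerivAt (fun z : ℝ => 1 + θ + θ * z) (θ * 1) y :=
    ((hasDerivAt_id' (x := y)).const_mul θ).const_add (1 + θ)
  have hexp : HasDerivAt (fun z : ℝ => exp (-z)) (exp (-y) * (-1)) y :=
    (hasDerivAt_neg y).exp
  have H := (((hexp.mul hlin).div_const (1 + θ)).const_sub 1)
  refine H.congr_deriv ?_
  simp only [gEE]
  field_simp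
  ring

set_option maxHeartbeats 1000000 in
lemma inner_int (θ : ℝ) (hne : (1:ℝ) + θ ≠ 0) (s : ℝ) :
    ∫ y in (0:ℝ)..s, GEE θ y * (1 - GEE θ y) * gEE θ y
      = (GEE θ s)^2/2 - (GEE θ s)^3/3 := by
  have hcg : Continuous (gEE θ) := by
    unfold gEE; exact (continuous_const.add (continuous_const.mul continuous_id)).mul
      (continuous_neg.rexp) |>.div_const _
  have hcG : Continuous (GEE θ) := by
    unfold GEE
    exact continuous_const.sub (((continuous_neg.rexp).mul
      (continuous_const.add (continuous_const.mul continuous_id))).div_const _)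
  have hd : ∀ y : ℝ, HasDerivAt (fun y => (GEE θ y)^2/2 - (GEE θ y)^3/3)
      (GEE θ y * (1 - GEE θ y) * gEE θ y) y := by
    intro y
    have h := ((((hasDerivAt_GEE θ hne y).pow 2).div_const 2).sub
      (((hasDerivAt_GEE θ hne y).pow 3).div_const 3))
    refine h.congr_deriv ?_
    push_cast
    ring
  have hint : IntervalIntegrable (fun y => GEE θ y * (1 - GEE θ y) * gEE θ y) volume 0 s :=
    ((hcG.mul (continuous_const.sub hcG)).mul hcg).intervalIntegrable 0 s
  rw [intervalIntegral.integral_eq_sub_of_hasDerivAt (fun y _ => hd y) hint]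
  have h0 : GEE θ 0 = 0 := by
    simp only [GEE, neg_zero, Real.exp_zero, mul_zero, add_zero, one_mul]
    field_simp
    norm_num
  rw [h0]
  norm_num

set_option maxHeartbeats 4000000 in
lemma hasDerivAt_F (θ t : ℝ) (hne : (1:ℝ) + θ ≠ 0) (x : ℝ) :
    HasDerivAt (fun y : ℝ => (((((-1/6) + (-2/3)*θ + (-1)*θ^2 + (-2/3)*θ^3 + (-1/6)*θ^4 :ℝ)) + (((-1/6)*θ + (-1/2)*θ^2 + (-1/2)*θ^3 + (-1/6)*θ^4 :ℝ))*y + (0:ℝ)*y^2 + (0:ℝ)*y^3 + (0:ℝ)*y^4 ) * Real.exp (-y) + ((((-1/2) + (-2)*θ + (-1)*θ^2 + 6*θ^3 + (11/2)*θ^4 + (-1)*t*θ + (-2)*t*θ^2 + 2*t*θ^3 + 3*t*θ^4 + (-1/2)*t^2*θ^2 + (1/2)*t^2*θ^4 :ℝ)) + (((1/2)*θ + (-1/2)*θ^2 + (-13/2)*θ^3 + (-11/2)*θ^4 + (-3)*t*θ^3 + (-3)*t*θ^4 + (-1/2)*t^2*θ^3 + (-1/2)*t^2*θ^4 :ℝ))*y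 + (((1/2)*θ^2 + 3*θ^3 + (5/2)*θ^4 + 1*t*θ^3 + 1*t*θ^4 :ℝ))*y^2 + (((-1/2)*θ^3 + (-1/2)*θ^4 :ℝ))*y^3 + (0:ℝ)*y^4 ) * Real.exp (y - 2*t) + ((((1/6) + (2/3)*θ + (3/4)*θ^2 + (-1/3)*θ^3 + (-23/24)*θ^4 + (1/2)*t*θ + (5/4)*t*θ^2 + (1/4)*t*θ^3 + (-9/8)*t*θ^4 + (1/2)*t^2*θ^2 + (1/2)*t^2*θ^3 + (-1/2)*t^2*θ^4 + (1/6)*t^3*θ^3 + (-1/12)*t^3*θ^4 :ℝ)) + (((-1/3)*θ + (-1/2)*θ^2 + 1*θ^3 + (23/12)*θ^4 + (-1/2)*t*θ^2 + (1/2)*t*θ^3 + (9/4)*t*θ^4 + 1*t^2*θ^4 + (1/6)*t^3*θ^4 :ℝ))*y + (((-1)*θ^3 + (-7/4)*θ^4 + (-1/2)*t*θ^3 + (-7/4)*t*θ^4 + (-1/2)*t^2*θ^4 :ℝ))*y^2 + (((1/3)*θ^3 + (5/6)*θ^4 + (1/2)*t*θ^4 :ℝ))*y^3 + (((-1/6)*θ^4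 :ℝ))*y^4 ) * Real.exp (2*y - 3*t)) / (1+θ)^4)
      (gEE θ x * ((GEE θ (t - x))^2/2 - (GEE θ (t - x))^3/3)) x := by
  have hexp1 : HasDerivAt (fun y : ℝ => exp (-y)) (exp (-x) * (-1)) x := (hasDerivAt_neg x).exp
  have hexp2 : HasDerivAt (fun y : ℝ => exp (y - 2*t)) (exp (x - 2*t) * 1) x :=
    ((hasDerivAt_id' (x := x)).sub_const (2*t)).exp
  have hexp3 : HasDerivAt (fun y : ℝ => exp (2*y - 3*t)) (exp (2*x - 3*t) * (2*1)) x :=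
    (((hasDerivAt_id' (x := x)).const_mul 2).sub_const (3*t)).exp
  have H := ((((hasDerivAt_poly4 (((-1/6) + (-2/3)*θ + (-1)*θ^2 + (-2/3)*θ^3 + (-1/6)*θ^4 :ℝ)) (((-1/6)*θ + (-1/2)*θ^2 + (-1/2)*θ^3 + (-1/6)*θ^4 :ℝ)) (0:ℝ) (0:ℝ) (0:ℝ) x).mul hexp1).add
      ((hasDerivAt_poly4 (((-1/2) + (-2)*θ + (-1)*θ^2 + 6*θ^3 + (11/2)*θ^4 + (-1)*t*θ + (-2)*t*θ^2 + 2*t*θ^3 + 3*t*θ^4 + (-1/2)*t^2*θ^2 + (1/2)*t^2*θ^4 :ℝ)) (((1/2)*θ + (-1/2)*θ^2 + (-13/2)*θ^3 + (-11/2)*θ^4 + (-3)*t*θ^3 + (-3)*t*θ^4 + (-1/2)*t^2*θ^3 + (-1/2)*t^2*θ^4 :ℝ)) (((1/2)*θ^2 + 3*θ^3 + (5/2)*θ^4 + 1*t*θ^3 + 1*t*θ^4 :ℝ)) (((-1/2)*θ^3 + (-1/2)*θ^4 :ℝ)) (0:ℝ) x).mul hexp2)).add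
      ((hasDerivAt_poly4 (((1/6) + (2/3)*θ + (3/4)*θ^2 + (-1/3)*θ^3 + (-23/24)*θ^4 + (1/2)*t*θ + (5/4)*t*θ^2 + (1/4)*t*θ^3 + (-9/8)*t*θ^4 + (1/2)*t^2*θ^2 + (1/2)*t^2*θ^3 + (-1/2)*t^2*θ^4 + (1/6)*t^3*θ^3 + (-1/12)*t^3*θ^4 :ℝ)) (((-1/3)*θ + (-1/2)*θ^2 + 1*θ^3 + (23/12)*θ^4 + (-1/2)*t*θ^2 + (1/2)*t*θ^3 + (9/4)*t*θ^4 + 1*t^2*θ^4 + (1/6)*t^3*θ^4 :ℝ)) (((-1)*θ^3 + (-7/4)*θ^4 + (-1/2)*t*θ^3 + (-7/4)*t*θ^4 + (-1/2)*t^2*θ^4 :ℝ)) (((1/3)*θ^3 + (5/6)*θ^4 + (1/2)*t*θ^4 :ℝ)) (((-1/6)*θ^4 :ℝ)) x).mul hexp3)).div_const ((1+θ)^4)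
  refine H.congr_deriv ?_
  simp only [gEE, GEE]
  have e1 : exp (-x) = (exp x)⁻¹ := Real.exp_neg x
  have e2 : exp (x - 2*t) = exp x * (exp t * exp t)⁻¹ := by
    rw [show x - 2*t = x + -(t+t) by ring, Real.exp_add, Real.exp_neg, Real.exp_add]
  have e3 : exp (2*x - 3*t) = exp x * exp x * (exp t * exp t * exp t)⁻¹ := by
    rw [show 2*x - 3*t = x + x + -(t+(t+t)) by ring, Real.exp_add, Real.exp_add,
      Real.exp_neg, Real.exp_add, Real.exp_add]
    ring
  have e4 : exp (-(t - x)) = exp x * (exp t)⁻¹ := by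
    rw [show -(t - x) = x + -t by ring, Real.exp_add, Real.exp_neg]
  rw [e1, e2, e3, e4]
  have hx0 : exp x ≠ 0 := Real.exp_ne_zero x
  have ht0 : exp t ≠ 0 := Real.exp_ne_zero t
  field_simp
  ring

set_option maxHeartbeats 4000000 in
/-- The function `a(t,θ)` for the extended exponential alternative. -/
theorem stmt_14 (θ : ℝ) (hθ : 0 < θ) (t : ℝ) (ht : 0 ≤ t) :
    (GEE θ t)^3 - 6 * ∫ x in (0:ℝ)..t, gEE θ x *
        ∫ y in (0:ℝ)..(t - x), GEE θ y * (1 - GEE θ y) * gEE θ y =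
      (3 / (4 * (1 + θ)^4)) * exp (-(3*t)) * θ^2 *
        (-2 - 8*θ - 9*θ^2 - 2*t^3*θ^2 - 4*t^2*θ*(1 + 2*θ)
          + 8 * exp t * (1 + θ) * (2 + t + 6*θ + 4*t*θ + t^2*θ)
          - t*(2 + 10*θ + 13*θ^2)
          + exp (2*t) * (-14 - 56*θ - 39*θ^2 + t*(6 + 18*θ + 11*θ^2))) := by
  have hne : (1:ℝ) + θ ≠ 0 := by positivity
  have hin : ∀ x : ℝ, (∫ y in (0:ℝ)..(t - x), GEE θ y * (1 - GEE θ y) * gEE θ y)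
      = (GEE θ (t - x))^2/2 - (GEE θ (t - x))^3/3 := fun x => inner_int θ hne (t - x)
  simp only [hin]
  have hcg : Continuous (gEE θ) := by
    unfold gEE; exact (continuous_const.add (continuous_const.mul continuous_id)).mul
      (continuous_neg.rexp) |>.div_const _
  have hcG : Continuous (GEE θ) := by
    unfold GEE
    exact continuous_const.sub (((continuous_neg.rexp).mul
      (continuous_const.add (continuous_const.mul continuous_id))).div_const _)
  have hc2 : Continuous fun x : ℝ => GEE θ (t - x) := hcG.comp (continuous_const.sub continuous_id)
  have hint2 : IntervalIntegrable
      (fun x => gEE θ x * ((GEE θ (t - x))^2/2 - (GEE θ (t - x))^3/3)) volume 0 t :=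
    (hcg.mul (((hc2.pow 2).div_const 2).sub ((hc2.pow 3).div_const 3))).intervalIntegrable 0 t
  rw [intervalIntegral.integral_eq_sub_of_hasDerivAt (fun x _ => hasDerivAt_F θ t hne x) hint2]
  simp only [GEE]
  have e1 : exp (-t) = (exp t)⁻¹ := Real.exp_neg t
  have e2 : exp (t - 2*t) = (exp t)⁻¹ := by
    rw [show t - 2*t = -t by ring, Real.exp_neg]
  have e3 : exp (2*t - 3*t) = (exp t)⁻¹ := by
    rw [show 2*t - 3*t = -t by ring, Real.exp_neg]
  have e4 : exp (-(0:ℝ)) = 1 := by norm_num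
  have e5 : exp ((0:ℝ) - 2*t) = (exp t * exp t)⁻¹ := by
    rw [show (0:ℝ) - 2*t = -(t+t) by ring, Real.exp_neg, Real.exp_add]
  have e6 : exp (2*(0:ℝ) - 3*t) = (exp t * exp t * exp t)⁻¹ := by
    rw [show 2*(0:ℝ) - 3*t = -(t+(t+t)) by ring, Real.exp_neg, Real.exp_add, Real.exp_add]
    ring
  have e7 : exp (-(3*t)) = (exp t * exp t * exp t)⁻¹ := by
    rw [show 3*t = t+(t+t) by ring, Real.exp_neg, Real.exp_add, Real.exp_add]
    ring
  have e8 : exp (2*t) = exp t * exp t := by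
    rw [two_mul, Real.exp_add]
  simp only [e1, e2, e3, e4, e5, e6, e7, e8]
  have ht0 : exp t ≠ 0 := Real.exp_ne_zero t
  field_simp
  ring
end
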